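/- arXiv:2403.20305 — 10 statements merged into one kernel-verified Lean document; each statement's English description precedes it below -/
import Mathlib

section
/- Let G be an Abelian group and let P be a nonzero multilinear polynomial of degree at most d in n Boolean variables with coefficients in G. Then P is nonzero at a uniformly random input from {0,1}^n with probability at least 2^{-d}; equivalently, the number of points a ∈ {0,1}^n with P(a) ≠ 0 is at least 2^{n-d}. -/
/-- Evaluation of a multilinear polynomial with coefficients `c : Finset (Fin n) → G`
at a Boolean point `a`. -/
def mEval {n : ℕ} {G : Type*} [AddCommGroup G] (c : Finset (Fin n) → G)
    (a : Fin n → Bool) : G :=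
  ∑ I : Finset (Fin n), if ∀ i ∈ I, a i = true then c I else 0

lemma alt_sum_int {α : Type*} [DecidableEq α] (I₀ A : Finset α) (hA : A ⊆ I₀) :
    ∑ J ∈ I₀.powerset.filter (fun J => A ⊆ J), ((-1:ℤ) ^ J.card)
      = if A = I₀ then ((-1:ℤ) ^ I₀.card) else 0 := by
  have himg : I₀.powerset.filter (fun J => A ⊆ J)
      = (I₀ \ A).powerset.image (fun K => A ∪ K) := by
    ext J
    simp only [Finset.mem_filter, Finset.mem_powerset, Finset.mem_image]
    constructor
    · rintro ⟨hJ, hAJ⟩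
      exact ⟨J \ A, by
        constructor
        · exact Finset.sdiff_subset_sdiff hJ le_rfl
        · rw [Finset.union_sdiff_of_subset hAJ]⟩
    · rintro ⟨K, hK, rfl⟩
      exact ⟨Finset.union_subset hA (hK.trans (Finset.sdiff_subset)), Finset.subset_union_left⟩
  rw [himg, Finset.sum_image]
  · have : ∀ K ∈ (I₀ \ A).powerset, ((-1:ℤ) ^ (A ∪ K).card) = (-1:ℤ)^A.card * (-1:ℤ)^K.card := by
      intro K hK
      rw [Finset.mem_powerset] at hK
      have hdisj : Disjoint A K :=
        Finset.disjoint_left.mpr fun x hx hx' => (Finset.mem_sdiff.mp (hK hx')).2 hx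
      rw [Finset.card_union_of_disjoint hdisj, pow_add]
    rw [Finset.sum_congr rfl this, ← Finset.mul_sum, Finset.sum_powerset_neg_one_pow_card]
    by_cases h : A = I₀
    · subst h
      simp
    · have : I₀ \ A ≠ ∅ := by
        intro he
        exact h (Finset.Subset.antisymm hA (Finset.sdiff_eq_empty_iff_subset.mp he))
      simp [this, h]
  · intro x hx y hy hxy
    rw [Finset.mem_coe, Finset.mem_powerset] at hx hy
    have hx' : Disjoint A x :=
      Finset.disjoint_left.mpr fun i hi hi' => (Finset.mem_sdiff.mp (hx hi')).2 hi
    have hy' : Disjoint A y :=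
      Finset.disjoint_left.mpr fun i hi hi' => (Finset.mem_sdiff.mp (hy hi')).2 hi
    have := congrArg (fun s => s \ A) hxy
    simpa [Finset.union_sdiff_left, Finset.sdiff_eq_self_of_disjoint hx'.symm,
      Finset.sdiff_eq_self_of_disjoint hy'.symm] using this

lemma alt_sum {α : Type*} [DecidableEq α] {G : Type*} [AddCommGroup G]
    (I₀ A : Finset α) (hA : A ⊆ I₀) (g : G) :
    ∑ J ∈ I₀.powerset.filter (fun J => A ⊆ J), ((-1:ℤ) ^ J.card) • g
      = if A = I₀ then ((-1:ℤ) ^ I₀.card) • g else 0 := by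
  rw [← Finset.sum_smul, alt_sum_int I₀ A hA]
  by_cases h : A = I₀ <;> simp [h]

lemma key_lemma {n : ℕ} {G : Type*} [AddCommGroup G] (c : Finset (Fin n) → G)
    (I₀ : Finset (Fin n)) (hmax : ∀ I, I₀ ⊆ I → I ≠ I₀ → c I = 0) (b : Fin n → Bool) :
    ∑ J ∈ I₀.powerset, ((-1:ℤ) ^ J.card) •
        mEval c (fun i => if i ∈ I₀ then decide (i ∈ J) else b i)
      = ((-1:ℤ) ^ I₀.card) • c I₀ := by
  unfold mEval
  simp_rw [Finset.smul_sum]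
  rw [Finset.sum_comm]
  have hterm : ∀ I : Finset (Fin n),
      (∑ J ∈ I₀.powerset, ((-1:ℤ) ^ J.card) •
        (if ∀ i ∈ I, (if i ∈ I₀ then decide (i ∈ J) else b i) = true then c I else 0))
      = if I₀ ⊆ I ∧ (∀ i ∈ I, i ∉ I₀ → b i = true) then ((-1:ℤ) ^ I₀.card) • c I else 0 := by
    intro I
    by_cases hb : ∀ i ∈ I, i ∉ I₀ → b i = true
    · have hcond : ∀ J : Finset (Fin n),
          (∀ i ∈ I, (if i ∈ I₀ then decide (i ∈ J) else b i) = true) ↔ (I ∩ I₀ ⊆ J) := by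
        intro J
        constructor
        · intro h i hi
          rw [Finset.mem_inter] at hi
          have := h i hi.1
          rw [if_pos hi.2] at this
          exact of_decide_eq_true this
        · intro h i hi
          by_cases hi0 : i ∈ I₀
          · rw [if_pos hi0]
            exact decide_eq_true (h (Finset.mem_inter.mpr ⟨hi, hi0⟩))
          · rw [if_neg hi0]
            exact hb i hi hi0
      calc ∑ J ∈ I₀.powerset, ((-1:ℤ) ^ J.card) •
              (if ∀ i ∈ I, (if i ∈ I₀ then decide (i ∈ J) else b i) = true then c I else 0)
          = ∑ J ∈ I₀.powerset, (if I ∩ I₀ ⊆ J then ((-1:ℤ) ^ J.card) • c I else 0) := by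
            refine Finset.sum_congr rfl fun J _ => ?_
            rw [smul_ite, smul_zero]
            simp only [hcond J]
        _ = ∑ J ∈ I₀.powerset.filter (fun J => I ∩ I₀ ⊆ J), ((-1:ℤ) ^ J.card) • c I := by
            rw [Finset.sum_filter]
        _ = if I ∩ I₀ = I₀ then ((-1:ℤ) ^ I₀.card) • c I else 0 :=
            alt_sum I₀ (I ∩ I₀) Finset.inter_subset_right (c I)
        _ = if I₀ ⊆ I ∧ (∀ i ∈ I, i ∉ I₀ → b i = true) then ((-1:ℤ) ^ I₀.card) • c I else 0 := by
            have : (I ∩ I₀ = I₀) ↔ (I₀ ⊆ I ∧ (∀ i ∈ I, i ∉ I₀ → b i = true)) := by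
              rw [Finset.inter_eq_right]
              exact ⟨fun h => ⟨h, hb⟩, fun h => h.1⟩
            simp only [this]
    · have : ∃ i ∈ I, i ∉ I₀ ∧ b i ≠ true := by
        push_neg at hb
        obtain ⟨i, hi, h1, h2⟩ := hb
        exact ⟨i, hi, h1, h2⟩
      obtain ⟨i, hi, hi0, hbi⟩ := this
      rw [if_neg (by tauto)]
      refine Finset.sum_eq_zero fun J _ => ?_
      rw [if_neg, smul_zero]
      intro h
      have := h i hi
      rw [if_neg hi0] at this
      exact hbi this
  rw [Finset.sum_congr rfl (fun I _ => hterm I)]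
  rw [Finset.sum_eq_single_of_mem I₀ (Finset.mem_univ _)]
  · rw [if_pos ⟨le_rfl, fun i _ hi' => absurd ‹i ∈ I₀› hi'⟩]
  · intro I _ hI
    by_cases h : I₀ ⊆ I ∧ (∀ i ∈ I, i ∉ I₀ → b i = true)
    · rw [if_pos h, hmax I h.1 hI, smul_zero]
    · rw [if_neg h]

/-- DeMillo–Lipton–Schwartz–Zippel over the Boolean cube: a nonzero multilinear
polynomial of degree at most `d` is nonzero on at least `2^(n-d)` points of `{0,1}^n`. -/
theorem stmt_1 (n d : ℕ) (G : Type*) [AddCommGroup G] (c : Finset (Fin n) → G)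
    (hdeg : ∀ I, c I ≠ 0 → I.card ≤ d) (hne : c ≠ 0) :
    2 ^ (n - d) ≤ Nat.card {a : Fin n → Bool | mEval c a ≠ 0} := by
  classical
  -- choose a maximal-cardinality nonzero coefficient
  have hex : ∃ I, c I ≠ 0 := by
    by_contra h
    push_neg at h
    exact hne (funext h)
  set s : Finset (Finset (Fin n)) := Finset.univ.filter (fun I => c I ≠ 0) with hs
  have hsne : s.Nonempty := by
    obtain ⟨I, hI⟩ := hex
    exact ⟨I, by simp [hs, hI]⟩
  obtain ⟨I₀, hI₀s, hI₀max⟩ := Finset.exists_max_image s Finset.card hsne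
  have hI₀ne : c I₀ ≠ 0 := by simpa [hs] using hI₀s
  have hmax : ∀ I, I₀ ⊆ I → I ≠ I₀ → c I = 0 := by
    intro I hsub hne'
    by_contra hcI
    have hIs : I ∈ s := by simp [hs, hcI]
    have h1 : I.card ≤ I₀.card := hI₀max I hIs
    have h2 : I₀.card < I.card :=
      Finset.card_lt_card (Finset.ssubset_iff_subset_ne.mpr ⟨hsub, Ne.symm hne'⟩)
    omega
  -- from each assignment outside I₀, get a witness point
  have hwit : ∀ b : Fin n → Bool, ∃ a : Fin n → Bool,
      mEval c a ≠ 0 ∧ ∀ i, i ∉ I₀ → a i = b i := by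
    intro b
    by_contra h
    push_neg at h
    have hzero : ∀ J ∈ I₀.powerset,
        ((-1:ℤ) ^ J.card) • mEval c (fun i => if i ∈ I₀ then decide (i ∈ J) else b i) = 0 := by
      intro J _
      by_cases hme : mEval c (fun i => if i ∈ I₀ then decide (i ∈ J) else b i) = 0
      · rw [hme, smul_zero]
      · obtain ⟨i, hi, hne2⟩ := h _ hme
        exact absurd (if_neg hi) hne2
    have := key_lemma c I₀ hmax b
    rw [Finset.sum_eq_zero hzero] at this
    rcases neg_one_pow_eq_or ℤ I₀.card with h1 | h1 <;> rw [h1] at this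
    · rw [one_smul] at this; exact hI₀ne this.symm
    · rw [neg_smul, one_smul, eq_comm, neg_eq_zero] at this; exact hI₀ne this
  -- injection from assignments on the complement
  set T := ({x // x ∈ I₀ᶜ} → Bool)
  have hf : ∀ b : T, ∃ a : Fin n → Bool, mEval c a ≠ 0 ∧
      ∀ i : Fin n, ∀ h : i ∈ I₀ᶜ, a i = b ⟨i, h⟩ := by
    intro b
    obtain ⟨a, ha, ha'⟩ := hwit (fun i => if h : i ∈ I₀ᶜ then b ⟨i, h⟩ else false)
    refine ⟨a, ha, fun i h => ?_⟩
    have hni : i ∉ I₀ := by simpa using h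
    rw [ha' i hni, dif_pos h]
  choose f hf1 hf2 using hf
  have hinj : Function.Injective
      (fun b : T => (⟨f b, hf1 b⟩ : {a : Fin n → Bool | mEval c a ≠ 0})) := by
    intro b1 b2 h
    have heq : f b1 = f b2 := congrArg Subtype.val h
    funext i
    rw [← hf2 b1 i.1 i.2, ← hf2 b2 i.1 i.2, heq]
  have hcard : Nat.card T ≤ Nat.card {a : Fin n → Bool | mEval c a ≠ 0} :=
    Nat.card_le_card_of_injective _ hinj
  have hTcard : Nat.card T = 2 ^ (n - I₀.card) := by
    simp [T, Nat.card_eq_fintype_card, Finset.card_compl]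
  have hd : I₀.card ≤ d := hdeg I₀ hI₀ne
  calc (2:ℕ) ^ (n - d) ≤ 2 ^ (n - I₀.card) :=
        Nat.pow_le_pow_right (by norm_num) (Nat.sub_le_sub_left hd n)
    _ = Nat.card T := hTcard.symm
    _ ≤ _ := hcard
end

section
/- For any Abelian group G and degree bound d, any two distinct degree-d multilinear polynomials P, Q : {0,1}^n → G differ on at least a 2^{-d} fraction of points of {0,1}^n. Consequently, any function f : {0,1}^n → G agrees with at most one degree-d polynomial on strictly more than a (1 - 2^{-(d+1)}) fraction of points. -/
open Finset

theorem mEval_eq_sum_powerset {n : ℕ} {G : Type*} [AddCommGroup G]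
    (c : Finset (Fin n) → G) (x : Fin n → Bool) :
    mEval c x = ∑ J ∈ (Finset.univ.filter fun i => x i = true).powerset, c J := by
  classical
  unfold mEval
  rw [← Finset.sum_filter]
  apply Finset.sum_congr _ (fun _ _ => rfl)
  ext J
  simp [Finset.subset_iff]

theorem sum_powerset_union {α : Type*} [DecidableEq α] {G : Type*} [AddCommGroup G]
    (s t : Finset α) (hst : Disjoint s t) (f : Finset α → G) :
    ∑ J ∈ (s ∪ t).powerset, f J = ∑ a ∈ s.powerset, ∑ b ∈ t.powerset, f (a ∪ b) := by
  classical
  induction s using Finset.induction_on generalizing f with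
  | empty => simp
  | insert i s' hns ih =>
    have hd : Disjoint s' t := by
      exact hst.mono_left (Finset.subset_insert _ _)
    have hit : i ∉ t := by
      intro h
      exact (Finset.disjoint_left.mp hst (Finset.mem_insert_self i s')) h
    have h1 : (insert i s' ∪ t) = insert i (s' ∪ t) := by
      ext j; simp [or_assoc]
    have h2 : i ∉ s' ∪ t := by simp [hns, hit]
    rw [h1, Finset.sum_powerset_insert h2, Finset.sum_powerset_insert hns,
      ih hd f, ih hd (fun t => f (insert i t))]
    congr 1
    apply Finset.sum_congr rfl; intro a _
    apply Finset.sum_congr rfl; intro b _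
    congr 1
    ext j; simp [or_assoc]

theorem vanish_of_sum_powerset {α : Type*} [DecidableEq α] {G : Type*} [AddCommGroup G]
    (h : Finset α → G) (I : Finset α)
    (H : ∀ S ⊆ I, ∑ S' ∈ S.powerset, h S' = 0) :
    ∀ S ⊆ I, h S = 0 := by
  classical
  intro S
  induction S using Finset.strongInduction with
  | _ S ih =>
    intro hSI
    have h1 : ∑ S' ∈ S.powerset, h S' = 0 := H S hSI
    have h2 : ∑ S' ∈ S.powerset.erase S, h S' = 0 := by
      apply Finset.sum_eq_zero
      intro S' hS'
      have hmem := Finset.mem_of_mem_erase hS'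
      have hne := Finset.ne_of_mem_erase hS'
      have hsub : S' ⊆ S := Finset.mem_powerset.mp hmem
      exact ih S' (lt_of_le_of_ne hsub hne) (hsub.trans hSI)
    have h3 : S ∈ S.powerset := Finset.mem_powerset.mpr (le_refl S)
    have := Finset.add_sum_erase _ h h3
    rw [h1, h2] at this
    simpa using this

open Classical in
theorem count_nonzero {n : ℕ} {G : Type*} [AddCommGroup G] (d : ℕ)
    (c : Finset (Fin n) → G) (hd : ∀ I, c I ≠ 0 → I.card ≤ d) (hc : c ≠ 0) :
    2 ^ n ≤ 2 ^ d * (Finset.univ.filter fun x : Fin n → Bool => mEval c x ≠ 0).card := by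
  classical
  have hex : ∃ I, c I ≠ 0 := by
    by_contra h
    push_neg at h
    exact hc (funext fun I => h I)
  have hsupp : (univ.filter fun I : Finset (Fin n) => c I ≠ 0).Nonempty := by
    obtain ⟨I, hI⟩ := hex
    exact ⟨I, by simp [hI]⟩
  obtain ⟨I, hIs, hImax⟩ := Finset.exists_max_image _ (fun J : Finset (Fin n) => J.card) hsupp
  have hcI : c I ≠ 0 := (Finset.mem_filter.mp hIs).2
  have hmax : ∀ J, c J ≠ 0 → J.card ≤ I.card := by
    intro J hJ
    exact hImax J (Finset.mem_filter.mpr ⟨Finset.mem_univ _, hJ⟩)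
  set Kb : {j : Fin n // j ∉ I} → Bool → Finset (Fin n) := fun _ _ => ∅ with hKdef
  clear hKdef Kb
  have key : ∀ b : {j : Fin n // j ∉ I} → Bool,
      ∃ S ⊆ I, mEval c (fun i => if h : i ∈ I then decide (i ∈ S) else b ⟨i, h⟩) ≠ 0 := by
    intro b
    by_contra hcon
    push_neg at hcon
    set Kb : Finset (Fin n) :=
      univ.filter (fun i : Fin n => ∃ h : i ∉ I, b ⟨i, h⟩ = true) with hKb
    have hIKb : Disjoint I Kb := by
      rw [Finset.disjoint_left]
      intro i hi hiK
      rw [hKb, Finset.mem_filter] at hiK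
      exact hiK.2.1 hi
    have hones : ∀ S ⊆ I,
        (univ.filter fun i =>
          (fun i => if h : i ∈ I then decide (i ∈ S) else b ⟨i, h⟩) i = true) = S ∪ Kb := by
      intro S hS
      ext i
      by_cases hi : i ∈ I
      · have hiK : i ∉ Kb := Finset.disjoint_left.mp hIKb hi
        simp [hi, hiK]
      · have hiS : i ∉ S := fun h => hi (hS h)
        simp [hi, hiS, hKb]
    set h0 : Finset (Fin n) → G := fun S' => ∑ K ∈ Kb.powerset, c (S' ∪ K) with hh0
    have hzero : ∀ S ⊆ I, ∑ S' ∈ S.powerset, h0 S' = 0 := by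
      intro S hS
      have hz := hcon S hS
      rw [mEval_eq_sum_powerset, hones S hS,
        sum_powerset_union S Kb (hIKb.mono_left hS) c] at hz
      exact hz
    have hI0 : h0 I = 0 := vanish_of_sum_powerset h0 I hzero I (le_refl I)
    have hcIeq : h0 I = c I := by
      show (∑ K ∈ Kb.powerset, c (I ∪ K)) = c I
      rw [Finset.sum_eq_single ∅]
      · rw [Finset.union_empty]
      · intro K hK hKne
        by_contra hcne
        have h1 := hmax _ hcne
        have hdisj : Disjoint I K := hIKb.mono_right (Finset.mem_powerset.mp hK)
        rw [Finset.card_union_of_disjoint hdisj] at h1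
        have : 0 < K.card := Finset.card_pos.mpr (Finset.nonempty_of_ne_empty hKne)
        omega
      · intro h
        exact absurd (Finset.mem_powerset.mpr (Finset.empty_subset _)) h
    exact hcI (hcIeq ▸ hI0)
  have hcount : Fintype.card ({j : Fin n // j ∉ I} → Bool) ≤
      (univ.filter fun x : Fin n → Bool => mEval c x ≠ 0).card := by
    rw [← Finset.card_univ]
    apply Finset.card_le_card_of_surjOn (fun x (j : {j : Fin n // j ∉ I}) => x j.1)
    intro b _
    obtain ⟨S, hS, hne⟩ := key b
    refine ⟨fun i => if h : i ∈ I then decide (i ∈ S) else b ⟨i, h⟩, ?_, ?_⟩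
    · simp only [Finset.coe_filter, Set.mem_setOf_eq]
      exact ⟨Finset.mem_univ _, hne⟩
    · funext j
      simp [j.2]
  have hcard2 : Fintype.card ({j : Fin n // j ∉ I} → Bool) = 2 ^ (n - I.card) := by
    rw [Fintype.card_fun, Fintype.card_subtype_compl]
    simp
  have hIn : I.card ≤ n := by
    have := Finset.card_le_univ I
    simpa using this
  calc 2 ^ n = 2 ^ I.card * 2 ^ (n - I.card) := by
        rw [← pow_add, Nat.add_sub_cancel' hIn]
    _ ≤ 2 ^ d * (univ.filter fun x : Fin n → Bool => mEval c x ≠ 0).card := by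
        apply Nat.mul_le_mul
        · exact Nat.pow_le_pow_right (by norm_num) (hd I hcI)
        · rw [← hcard2]; exact hcount

theorem mEval_sub {n : ℕ} {G : Type*} [AddCommGroup G]
    (p q : Finset (Fin n) → G) (x : Fin n → Bool) :
    mEval (p - q) x = mEval p x - mEval q x := by
  unfold mEval
  rw [← Finset.sum_sub_distrib]
  apply Finset.sum_congr rfl
  intro I _
  by_cases h : ∀ i ∈ I, x i = true
  · rw [if_pos h, if_pos h, if_pos h, Pi.sub_apply]
  · rw [if_neg h, if_neg h, if_neg h, sub_zero]

theorem natcard_eq {α : Type*} [Fintype α] (P : α → Prop) [DecidablePred P] :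
    Nat.card {x | P x} = (univ.filter P).card := by
  rw [Nat.card_eq_fintype_card]
  exact Fintype.card_subtype P

/-- Two distinct degree-`d` multilinear polynomials differ on at least a `2^(-d)`
fraction of `{0,1}^n`; consequently any `f` agrees with at most one degree-`d`
polynomial on strictly more than a `1 - 2^(-(d+1))` fraction of points. -/
theorem stmt_2 (n d : ℕ) (G : Type*) [AddCommGroup G] :
    (∀ p q : Finset (Fin n) → G,
      (∀ I, p I ≠ 0 → I.card ≤ d) → (∀ I, q I ≠ 0 → I.card ≤ d) → p ≠ q →
      2 ^ n ≤ 2 ^ d * Nat.card {x : Fin n → Bool | mEval p x ≠ mEval q x}) ∧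
    (∀ f : (Fin n → Bool) → G, ∀ p q : Finset (Fin n) → G,
      (∀ I, p I ≠ 0 → I.card ≤ d) → (∀ I, q I ≠ 0 → I.card ≤ d) →
      (1 - 1 / 2 ^ (d + 1)) * 2 ^ n <
        (Nat.card {x : Fin n → Bool | f x = mEval p x} : ℚ) →
      (1 - 1 / 2 ^ (d + 1)) * 2 ^ n <
        (Nat.card {x : Fin n → Bool | f x = mEval q x} : ℚ) →
      p = q) := by
  classical
  have main : ∀ p q : Finset (Fin n) → G,
      (∀ I, p I ≠ 0 → I.card ≤ d) → (∀ I, q I ≠ 0 → I.card ≤ d) → p ≠ q →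
      2 ^ n ≤ 2 ^ d * Nat.card {x : Fin n → Bool | mEval p x ≠ mEval q x} := by
    intro p q hp hq hne
    have hc : p - q ≠ 0 := sub_ne_zero.mpr hne
    have hdc : ∀ I, (p - q) I ≠ 0 → I.card ≤ d := by
      intro I hI
      by_cases h : p I = 0
      · apply hq
        intro hq0
        apply hI
        simp [Pi.sub_apply, h, hq0]
      · exact hp I h
    have hcount := count_nonzero d (p - q) hdc hc
    rw [natcard_eq]
    refine le_trans hcount (le_of_eq ?_)
    congr 1
    apply Finset.card_nbij id
    · intro x hx
      simp only [Finset.mem_coe, Finset.mem_filter] at hx ⊢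
      refine ⟨hx.1, ?_⟩
      rw [← sub_ne_zero, ← mEval_sub]
      exact hx.2
    · intro x _ y _ h
      exact h
    · intro x hx
      refine ⟨x, ?_, rfl⟩
      simp only [Finset.mem_coe, Finset.mem_filter] at hx ⊢
      refine ⟨hx.1, ?_⟩
      rw [mEval_sub, sub_ne_zero]
      exact hx.2
  refine ⟨main, ?_⟩
  intro f p q hp hq h1 h2
  by_contra hne
  have hD := main p q hp hq hne
  rw [natcard_eq] at h1 h2 hD
  set A := univ.filter (fun x : Fin n → Bool => f x = mEval p x) with hA
  set B := univ.filter (fun x : Fin n → Bool => f x = mEval q x) with hB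
  set D := univ.filter (fun x : Fin n → Bool => mEval p x ≠ mEval q x) with hDdef
  have hdisj : Disjoint (A ∩ B) D := by
    rw [Finset.disjoint_left]
    intro x hx hxD
    rw [Finset.mem_inter, hA, hB, Finset.mem_filter, Finset.mem_filter] at hx
    rw [hDdef, Finset.mem_filter] at hxD
    exact hxD.2 (hx.1.2 ▸ hx.2.2)
  have huniv : (univ : Finset (Fin n → Bool)).card = 2 ^ n := by
    simp [Finset.card_univ]
  have h3 : (A ∩ B).card + D.card ≤ 2 ^ n := by
    rw [← Finset.card_union_of_disjoint hdisj, ← huniv]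
    exact Finset.card_le_univ _
  have h4 : (A ∪ B).card + (A ∩ B).card = A.card + B.card :=
    Finset.card_union_add_card_inter A B
  have h5 : (A ∪ B).card ≤ 2 ^ n := by
    rw [← huniv]; exact Finset.card_le_univ _
  have hsum : A.card + B.card + D.card ≤ 2 ^ n + 2 ^ n := by omega
  -- move to ℚ
  have hDq : (2 : ℚ) ^ n ≤ 2 ^ d * D.card := by exact_mod_cast hD
  have hsumq : (A.card : ℚ) + B.card + D.card ≤ 2 ^ n + 2 ^ n := by exact_mod_cast hsum
  have ht : (0 : ℚ) < 2 ^ d := by positivity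
  have h2d : (2 : ℚ) ^ (d + 1) = 2 * 2 ^ d := by ring
  rw [h2d] at h1 h2
  have hDlt : (D.card : ℚ) < 2 ^ n / 2 ^ d := by
    have e : ((1 : ℚ) - 1 / (2 * 2 ^ d)) * 2 ^ n = 2 ^ n - 2 ^ n / (2 * 2 ^ d) := by ring
    rw [e] at h1 h2
    have e2 : (2 : ℚ) * (2 ^ n / (2 * 2 ^ d)) = 2 ^ n / 2 ^ d := by
      field_simp
    nlinarith [h1, h2, hsumq]
  have : (D.card : ℚ) * 2 ^ d < 2 ^ n := (lt_div_iff₀ ht).mp hDlt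
  nlinarith [this, hDq]
end

section
/- For every natural number k ≥ 1, there exists a (2^k − 1) × (2k − 1) matrix A_k with entries in {0,1} and a vector c ∈ ℤ^{2k−1} such that: (1) A_k c equals the all-ones vector 1^{2^k−1}; (2) exactly one row of A_k is the all-ones row (1,...,1); (3) the sum of the entries of c equals 1; and (4) every column of A_k has Hamming weight in the interval [2^{k−1} − 1, 2^{k−1} + 1]. -/
open Finset

private lemma sum_range_add' {M : Type*} [AddCommMonoid M] (f : ℕ → M) (a b : ℕ) :
    ∑ j ∈ range (a + b), f j = (∑ j ∈ range a, f j) + ∑ j ∈ range b, f (a + j) := by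
  induction b with
  | zero => simp
  | succ b ih => rw [Nat.add_succ, sum_range_succ, sum_range_succ, ih, add_assoc]

private lemma geom2 (n : ℕ) : ∑ j ∈ range n, (2:ℤ)^j = 2^n - 1 := by
  induction n with
  | zero => simp
  | succ n ih => rw [sum_range_succ, ih]; ring

private lemma digit_sum (t : ℕ) : ∀ m : ℕ, m < 2^t →
    ∑ j ∈ range t, (if m.testBit j then (2:ℤ)^j else 0) = m := by
  induction t with
  | zero => intro m hm; interval_cases m; simp
  | succ t ih =>
    intro m hm
    rw [Finset.sum_range_succ']
    have h1 : ∀ j ∈ range t, (if m.testBit (j+1) then (2:ℤ)^(j+1) else 0)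
        = 2 * (if (m/2).testBit j then (2:ℤ)^j else 0) := by
      intro j _
      rw [Nat.testBit_add_one]
      split_ifs <;> ring
    rw [Finset.sum_congr rfl h1, ← Finset.mul_sum, ih (m/2) (by omega)]
    have h2 : m % 2 = 0 ∨ m % 2 = 1 := by omega
    rcases h2 with h2 | h2 <;>
      simp [Nat.testBit_zero, h2] <;> omega

private lemma count_bits (t : ℕ) : ∀ j, j < t →
    ∑ m ∈ range (2^t), (if m.testBit j then (1:ℤ) else 0) = 2^(t-1) := by
  induction t with
  | zero => omega
  | succ t ih =>
    intro j hj
    have h2 : 2^(t+1) = 2^t + 2^t := by ring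
    rw [h2, sum_range_add']
    rcases Nat.lt_or_ge j t with hjt | hjt
    · have h3 : ∀ m ∈ range (2^t), (if (2^t + m).testBit j then (1:ℤ) else 0)
          = (if m.testBit j then (1:ℤ) else 0) := by
        intro m _; rw [Nat.testBit_two_pow_add_gt hjt]
      rw [Finset.sum_congr rfl h3, ih j hjt]
      have hpow : (2:ℤ)^(t+1-1) = 2^(t-1) + 2^(t-1) := by
        rw [show t+1-1 = (t-1)+1 by omega, pow_succ]; ring
      rw [hpow]
    · have hjeq : j = t := by omega
      subst hjeq
      have h3 : ∀ m ∈ range (2^j), (if (2^j + m).testBit j then (1:ℤ) else 0) = 1 := by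
        intro m hm
        simp only [mem_range] at hm
        rw [Nat.testBit_two_pow_add_eq, Nat.testBit_lt_two_pow hm]
        simp
      have h4 : ∀ m ∈ range (2^j), (if m.testBit j then (1:ℤ) else 0) = 0 := by
        intro m hm
        simp only [mem_range] at hm
        rw [Nat.testBit_lt_two_pow hm]; simp
      rw [Finset.sum_congr rfl h3, Finset.sum_congr rfl h4]
      simp
private def entE (k i j : ℕ) : ℤ :=
  if j = 0 then (if i < 2^(k-1) then 1 else 0)
  else if j < k then
    (if Nat.testBit (if i < 2^(k-1) then i else i + 1 - 2^(k-1)) (j-1) then 1 else 0)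
  else (if Nat.testBit (if i < 2^(k-1) then i else i - 2^(k-1)) (j-k) then 1 else 0)

private def cfE (k j : ℕ) : ℤ :=
  if j = 0 then 1 else if j < k then 2^(j-1) else -2^(j-k)

private lemma entE_zero (k i : ℕ) : entE k i 0 = if i < 2^(k-1) then 1 else 0 := by
  simp [entE]

private lemma cfE_zero (k : ℕ) : cfE k 0 = 1 := by simp [cfE]

private lemma entE_a (k i j : ℕ) (h1 : j + 1 < k) :
    entE k i (j+1)
      = (if Nat.testBit (if i < 2^(k-1) then i else i + 1 - 2^(k-1)) j then 1 else 0) := by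
  simp [entE, h1]

private lemma cfE_a (k j : ℕ) (h1 : j + 1 < k) : cfE k (j+1) = 2^j := by
  simp [cfE, h1]

private lemma entE_b (k i j : ℕ) (hk : 1 ≤ k) :
    entE k i (k+j)
      = (if Nat.testBit (if i < 2^(k-1) then i else i - 2^(k-1)) j then 1 else 0) := by
  have h0 : k + j ≠ 0 := by omega
  have h1 : ¬ (k + j < k) := by omega
  have h2 : k + j - k = j := by omega
  simp [entE, h0, h1, h2, show k ≠ 0 by omega]

private lemma cfE_b (k j : ℕ) (hk : 1 ≤ k) : cfE k (k+j) = -2^j := by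
  have h0 : k + j ≠ 0 := by omega
  have h1 : ¬ (k + j < k) := by omega
  have h2 : k + j - k = j := by omega
  simp [cfE, h0, h1, h2, show k ≠ 0 by omega]
private lemma row_sum (k' i : ℕ) (hi : i < 2^(k'+1) - 1) :
    ∑ j ∈ range (2*(k'+1)-1), entE (k'+1) i j * cfE (k'+1) j = 1 := by
  have h2p : (2:ℕ)^(k'+1) = 2^k' + 2^k' := by ring
  have hsplit : 2*(k'+1)-1 = (k'+1) + k' := by omega
  rw [hsplit, sum_range_add', sum_range_succ']
  rw [entE_zero, cfE_zero]
  simp only [Nat.add_sub_cancel]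
  by_cases hiM : i < 2^k'
  · have ha : ∀ j ∈ range k', entE (k'+1) i (j+1) * cfE (k'+1) (j+1)
        = (if i.testBit j then (2:ℤ)^j else 0) := by
      intro j hj
      simp only [mem_range] at hj
      rw [entE_a _ _ _ (by omega), cfE_a _ _ (by omega)]
      simp only [Nat.add_sub_cancel, if_pos hiM]
      split_ifs <;> ring
    have hb : ∀ j ∈ range k', entE (k'+1) i ((k'+1)+j) * cfE (k'+1) ((k'+1)+j)
        = -(if i.testBit j then (2:ℤ)^j else 0) := by
      intro j hj
      rw [entE_b _ _ _ (by omega), cfE_b _ _ (by omega)]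
      simp only [Nat.add_sub_cancel, if_pos hiM]
      split_ifs <;> ring
    rw [Finset.sum_congr rfl ha, Finset.sum_congr rfl hb, if_pos hiM]
    simp
  · have ha : ∀ j ∈ range k', entE (k'+1) i (j+1) * cfE (k'+1) (j+1)
        = (if (i + 1 - 2^k').testBit j then (2:ℤ)^j else 0) := by
      intro j hj
      simp only [mem_range] at hj
      rw [entE_a _ _ _ (by omega), cfE_a _ _ (by omega)]
      simp only [Nat.add_sub_cancel, if_neg hiM]
      split_ifs <;> ring
    have hb : ∀ j ∈ range k', entE (k'+1) i ((k'+1)+j) * cfE (k'+1) ((k'+1)+j)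
        = -(if (i - 2^k').testBit j then (2:ℤ)^j else 0) := by
      intro j hj
      rw [entE_b _ _ _ (by omega), cfE_b _ _ (by omega)]
      simp only [Nat.add_sub_cancel, if_neg hiM]
      split_ifs <;> ring
    rw [Finset.sum_congr rfl ha, Finset.sum_congr rfl hb, if_neg hiM]
    rw [digit_sum k' _ (by omega)]
    have hneg : ∑ j ∈ range k', -(if (i - 2^k').testBit j then (2:ℤ)^j else 0)
        = -((i - 2^k' : ℕ) : ℤ) := by
      rw [Finset.sum_neg_distrib, digit_sum k' _ (by omega)]
    rw [hneg]
    have hge : 2^k' ≤ i := by omega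
    have key : ((i + 1 - 2^k' : ℕ) : ℤ) - ((i - 2^k' : ℕ) : ℤ) = 1 := by omega
    linarith
private lemma col_bound (k' j : ℕ) (hj : j < 2*(k'+1)-1) :
    (2:ℤ)^k' - 1 ≤ ∑ i ∈ range (2^(k'+1)-1), entE (k'+1) i j ∧
    ∑ i ∈ range (2^(k'+1)-1), entE (k'+1) i j ≤ 2^k' + 1 := by
  have h2p : (2:ℕ)^(k'+1) = 2^k' + 2^k' := by ring
  have hM1 : 1 ≤ 2^k' := Nat.one_le_two_pow
  have hrow : 2^(k'+1) - 1 = 2^k' + (2^k' - 1) := by omega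
  rw [hrow, sum_range_add']
  rcases Nat.eq_zero_or_pos j with hj0 | hjpos
  · subst hj0
    have e1 : ∀ i ∈ range (2^k'), entE (k'+1) i 0 = 1 := by
      intro i hi
      rw [entE_zero]
      simp only [Nat.add_sub_cancel]
      rw [if_pos (mem_range.mp hi)]
    have e2 : ∀ m ∈ range (2^k'-1), entE (k'+1) (2^k'+m) 0 = 0 := by
      intro m hm
      rw [entE_zero]
      simp only [Nat.add_sub_cancel]
      rw [if_neg (by omega)]
    rw [Finset.sum_congr rfl e1, Finset.sum_congr rfl e2]
    simp only [Finset.sum_const, Finset.card_range, nsmul_eq_mul, mul_one,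
      Finset.sum_const_zero, add_zero]
    push_cast
    constructor <;> linarith
  · rcases Nat.lt_or_ge j (k'+1) with hjk | hjk
    · obtain ⟨b, rfl⟩ : ∃ b, j = b + 1 := ⟨j - 1, by omega⟩
      have hb : b < k' := by omega
      have hk1 : 1 ≤ k' := by omega
      have e1 : ∀ i ∈ range (2^k'), entE (k'+1) i (b+1)
          = (if i.testBit b then (1:ℤ) else 0) := by
        intro i hi
        rw [entE_a _ _ _ (by omega)]
        simp only [Nat.add_sub_cancel]
        rw [if_pos (mem_range.mp hi)]
      have e2 : ∀ m ∈ range (2^k'-1), entE (k'+1) (2^k'+m) (b+1)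
          = (if (m+1).testBit b then (1:ℤ) else 0) := by
        intro m hm
        rw [entE_a _ _ _ (by omega)]
        simp only [Nat.add_sub_cancel]
        have hni : ¬ (2^k'+m < 2^k') := by omega
        rw [if_neg hni, show 2^k'+m+1-2^k' = m+1 from by omega]
      rw [Finset.sum_congr rfl e1, Finset.sum_congr rfl e2, count_bits k' b hb]
      have hs2 : ∑ m ∈ range (2^k'-1), (if (m+1).testBit b then (1:ℤ) else 0)
          = 2^(k'-1) := by
        have hss := Finset.sum_range_succ' (fun m => if m.testBit b then (1:ℤ) else 0) (2^k'-1)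
        rw [show 2^k'-1+1 = 2^k' from by omega, count_bits k' b hb] at hss
        simpa [Nat.zero_testBit] using hss.symm
      rw [hs2]
      have hpow : (2:ℤ)^k' = 2^(k'-1) + 2^(k'-1) := by
        obtain ⟨t, rfl⟩ : ∃ t, k' = t + 1 := ⟨k'-1, by omega⟩
        simp only [Nat.add_sub_cancel, pow_succ]; ring
      constructor <;> linarith
    · obtain ⟨b, rfl⟩ : ∃ b, j = (k'+1) + b := ⟨j - (k'+1), by omega⟩
      have hb : b < k' := by omega
      have hk1 : 1 ≤ k' := by omega
      have e1 : ∀ i ∈ range (2^k'), entE (k'+1) i ((k'+1)+b)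
          = (if i.testBit b then (1:ℤ) else 0) := by
        intro i hi
        rw [entE_b _ _ _ (by omega)]
        simp only [Nat.add_sub_cancel]
        rw [if_pos (mem_range.mp hi)]
      have e2 : ∀ m ∈ range (2^k'-1), entE (k'+1) (2^k'+m) ((k'+1)+b)
          = (if m.testBit b then (1:ℤ) else 0) := by
        intro m hm
        rw [entE_b _ _ _ (by omega)]
        simp only [Nat.add_sub_cancel]
        have hni : ¬ (2^k'+m < 2^k') := by omega
        rw [if_neg hni, show 2^k'+m-2^k' = m from by omega]
      rw [Finset.sum_congr rfl e1, Finset.sum_congr rfl e2, count_bits k' b hb]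
      have hs2 : ∑ m ∈ range (2^k'-1), (if m.testBit b then (1:ℤ) else 0)
          = 2^(k'-1) - 1 := by
        have hss := Finset.sum_range_succ (fun m => if m.testBit b then (1:ℤ) else 0) (2^k'-1)
        rw [show 2^k'-1+1 = 2^k' from by omega, count_bits k' b hb] at hss
        simp only [Nat.testBit_two_pow_sub_one, decide_eq_true_eq] at hss
        rw [if_pos hb] at hss
        linarith
      rw [hs2]
      have hpow : (2:ℤ)^k' = 2^(k'-1) + 2^(k'-1) := by
        obtain ⟨t, rfl⟩ : ∃ t, k' = t + 1 := ⟨k'-1, by omega⟩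
        simp only [Nat.add_sub_cancel, pow_succ]; ring
      constructor <;> linarith
private lemma allones_row (k' j : ℕ) (hj : j < 2*(k'+1)-1) :
    entE (k'+1) (2^k'-1) j = 1 := by
  have hM1 : 1 ≤ 2^k' := Nat.one_le_two_pow
  have hlt : 2^k' - 1 < 2^k' := by omega
  rcases Nat.eq_zero_or_pos j with hj0 | hjpos
  · subst hj0
    rw [entE_zero]
    simp only [Nat.add_sub_cancel]
    rw [if_pos hlt]
  · rcases Nat.lt_or_ge j (k'+1) with hjk | hjk
    · obtain ⟨b, rfl⟩ : ∃ b, j = b + 1 := ⟨j - 1, by omega⟩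
      have hb : b < k' := by omega
      rw [entE_a _ _ _ (by omega)]
      simp only [Nat.add_sub_cancel]
      rw [if_pos hlt]
      simp [Nat.testBit_two_pow_sub_one, hb]
    · obtain ⟨b, rfl⟩ : ∃ b, j = (k'+1) + b := ⟨j - (k'+1), by omega⟩
      have hb : b < k' := by omega
      rw [entE_b _ _ _ (by omega)]
      simp only [Nat.add_sub_cancel]
      rw [if_pos hlt]
      simp [Nat.testBit_two_pow_sub_one, hb]

private lemma allones_unique (k' i : ℕ) (hi : i < 2^(k'+1)-1)
    (h : ∀ j, j < 2*(k'+1)-1 → entE (k'+1) i j = 1) : i = 2^k' - 1 := by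
  have hM1 : 1 ≤ 2^k' := Nat.one_le_two_pow
  have h2p : (2:ℕ)^(k'+1) = 2^k' + 2^k' := by ring
  have h0 := h 0 (by omega)
  rw [entE_zero] at h0
  simp only [Nat.add_sub_cancel] at h0
  have hiM : i < 2^k' := by
    by_contra hc
    rw [if_neg hc] at h0
    exact absurd h0 (by norm_num)
  rcases Nat.eq_zero_or_pos k' with hk0 | hk1
  · subst hk0; simp at hiM; omega
  · have hbit : ∀ b, b < k' → i.testBit b = true := by
      intro b hb
      have hj := h (b+1) (by omega)
      rw [entE_a _ _ _ (by omega)] at hj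
      simp only [Nat.add_sub_cancel] at hj
      rw [if_pos hiM] at hj
      by_contra hc
      simp only [Bool.not_eq_true] at hc
      rw [hc] at hj
      exact absurd hj (by norm_num)
    have hd := digit_sum k' i hiM
    have he : ∀ b ∈ range k', (if i.testBit b then (2:ℤ)^b else 0) = 2^b := by
      intro b hb
      rw [if_pos (hbit b (mem_range.mp hb))]
    rw [Finset.sum_congr rfl he, geom2] at hd
    have hcast : ((2^k' - 1 : ℕ) : ℤ) = 2^k' - 1 := by
      rw [Nat.cast_sub hM1]; push_cast; ring
    have : (i : ℤ) = ((2^k' - 1 : ℕ) : ℤ) := by rw [hcast]; linarith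
    exact_mod_cast this

private lemma cf_sum (k' : ℕ) : ∑ j ∈ range (2*(k'+1)-1), cfE (k'+1) j = 1 := by
  have hsplit : 2*(k'+1)-1 = (k'+1) + k' := by omega
  rw [hsplit, sum_range_add', sum_range_succ', cfE_zero]
  have ha : ∀ j ∈ range k', cfE (k'+1) (j+1) = (2:ℤ)^j := by
    intro j hj
    exact cfE_a _ _ (by simp only [mem_range] at hj; omega)
  have hb : ∀ j ∈ range k', cfE (k'+1) ((k'+1)+j) = -(2:ℤ)^j := by
    intro j hj
    exact cfE_b _ _ (by omega)
  rw [Finset.sum_congr rfl ha, Finset.sum_congr rfl hb]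
  simp

/-- Construction of a nearly-balanced `{0,1}`-matrix whose columns span the all-ones
vector with integer coefficients summing to `1`, and with exactly one all-ones row. -/
theorem stmt_4 (k : ℕ) (hk : 1 ≤ k) :
    ∃ (A : Matrix (Fin (2 ^ k - 1)) (Fin (2 * k - 1)) ℤ) (c : Fin (2 * k - 1) → ℤ),
      (∀ i j, A i j = 0 ∨ A i j = 1) ∧
      A.mulVec c = (fun _ => 1) ∧
      (∃! i, ∀ j, A i j = 1) ∧
      (∑ j, c j) = 1 ∧
      (∀ j, (2 : ℤ) ^ (k - 1) - 1 ≤ ∑ i, A i j ∧ ∑ i, A i j ≤ 2 ^ (k - 1) + 1) := by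
  obtain ⟨k', rfl⟩ : ∃ k', k = k' + 1 := ⟨k - 1, by omega⟩
  have hM1 : 1 ≤ (2:ℕ)^k' := Nat.one_le_two_pow
  have h2p : (2:ℕ)^(k'+1) = 2^k' + 2^k' := by ring
  refine ⟨fun i j => entE (k'+1) i.val j.val, fun j => cfE (k'+1) j.val, ?_, ?_, ?_, ?_, ?_⟩
  · intro i j
    unfold entE
    dsimp only
    split_ifs <;> simp
  · funext i
    simp only [Matrix.mulVec, dotProduct]
    rw [Fin.sum_univ_eq_sum_range (fun j => entE (k'+1) i.val j * cfE (k'+1) j)]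
    exact row_sum k' i.val i.2
  · refine ⟨⟨2^k' - 1, by omega⟩, fun j => allones_row k' j.val j.2, fun y hy => ?_⟩
    apply Fin.ext
    exact allones_unique k' y.val y.2 (fun j hj => hy ⟨j, hj⟩)
  · rw [Fin.sum_univ_eq_sum_range (fun j => cfE (k'+1) j)]
    exact cf_sum k'
  · intro j
    rw [Fin.sum_univ_eq_sum_range (fun i => entE (k'+1) i j.val)]
    simpa only [Nat.add_sub_cancel] using col_bound k' j.val j.2
end

section
/- Let A_1, ..., A_k be finite sets, each of cardinality r, with |A_i ∩ A_j| ≤ t for all i ≠ j. Then |A_1 ∪ ... ∪ A_k| ≥ r²k / (r + (k−1)t). -/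
/-- Jukna's bound: if `A_1, …, A_k` each have cardinality `r` and pairwise
intersections of size at most `t`, then `|A_1 ∪ ⋯ ∪ A_k| ≥ r² k / (r + (k-1) t)`. -/
theorem stmt_8 {X : Type*} [DecidableEq X] (k r t : ℕ) (hk : 0 < k) (hr : 0 < r)
    (A : Fin k → Finset X) (hcard : ∀ i, (A i).card = r)
    (hint : ∀ i j, i ≠ j → ((A i) ∩ (A j)).card ≤ t) :
    ((r : ℚ) ^ 2 * k) / (r + (k - 1) * t) ≤ ((Finset.univ.biUnion A).card : ℚ) := by
  classical
  set U := Finset.univ.biUnion A with hU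
  set d : X → ℕ := fun x => (Finset.univ.filter fun i => x ∈ A i).card with hd
  have hsub : ∀ i, A i ⊆ U := fun i => Finset.subset_biUnion_of_mem A (Finset.mem_univ i)
  -- sum of degrees
  have h1 : ∑ x ∈ U, d x = k * r := by
    simp only [hd, Finset.card_eq_sum_ones (Finset.filter _ _), Finset.sum_filter]
    rw [Finset.sum_comm]
    have : ∀ i, (∑ x ∈ U, if x ∈ A i then 1 else 0) = r := by
      intro i
      rw [← Finset.sum_filter, ← Finset.card_eq_sum_ones]
      congr 1
      rw [Finset.filter_mem_eq_inter, Finset.inter_eq_right.mpr (hsub i)]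
      exact hcard i
    rw [Finset.sum_congr rfl fun i _ => this i]
    simp [mul_comm]
  -- sum of squared degrees
  have h2 : ∑ x ∈ U, (d x) ^ 2 = ∑ i : Fin k, ∑ j : Fin k, (A i ∩ A j).card := by
    have : ∀ x, (d x) ^ 2 = ∑ i : Fin k, ∑ j : Fin k,
        if x ∈ A i ∧ x ∈ A j then 1 else 0 := by
      intro x
      simp only [hd, sq, Finset.card_eq_sum_ones, Finset.sum_filter,
        Finset.sum_mul_sum]
      congr 1; ext i; congr 1; ext j
      by_cases h1 : x ∈ A i <;> by_cases h2 : x ∈ A j <;> simp [h1, h2]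
    rw [Finset.sum_congr rfl fun x _ => this x]
    rw [Finset.sum_comm]
    congr 1; ext i
    rw [Finset.sum_comm]
    congr 1; ext j
    rw [← Finset.sum_filter, ← Finset.card_eq_sum_ones]
    congr 1
    ext x
    simp only [Finset.mem_filter, Finset.mem_inter]
    constructor
    · rintro ⟨_, h⟩; exact h
    · intro h; exact ⟨hsub i h.1, h⟩
  -- bound on sum of squares
  have h3 : ∑ x ∈ U, (d x) ^ 2 ≤ k * (r + (k - 1) * t) := by
    rw [h2]
    have hbound : ∀ i : Fin k, ∑ j : Fin k, (A i ∩ A j).card ≤ r + (k - 1) * t := by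
      intro i
      rw [← Finset.sum_erase_add _ _ (Finset.mem_univ i)]
      have hA : (A i ∩ A i).card = r := by rw [Finset.inter_self]; exact hcard i
      rw [hA]
      have : ∑ j ∈ Finset.univ.erase i, (A i ∩ A j).card ≤ (k - 1) * t := by
        calc ∑ j ∈ Finset.univ.erase i, (A i ∩ A j).card
            ≤ ∑ _j ∈ Finset.univ.erase i, t := by
              apply Finset.sum_le_sum
              intro j hj
              exact hint i j (Ne.symm (Finset.ne_of_mem_erase hj))
          _ = (k - 1) * t := by
              rw [Finset.sum_const, smul_eq_mul]
              congr 1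
              rw [Finset.card_erase_of_mem (Finset.mem_univ i)]
              simp
      omega
    calc ∑ i : Fin k, ∑ j : Fin k, (A i ∩ A j).card
        ≤ ∑ _i : Fin k, (r + (k - 1) * t) := Finset.sum_le_sum fun i _ => hbound i
      _ = k * (r + (k - 1) * t) := by simp [mul_comm]
  -- Cauchy-Schwarz
  have hCS : ((∑ x ∈ U, d x : ℕ) : ℚ) ^ 2 ≤ (U.card : ℚ) * ∑ x ∈ U, ((d x : ℚ)) ^ 2 := by
    push_cast
    exact sq_sum_le_card_mul_sum_sq
  have h2Q : (∑ x ∈ U, ((d x : ℚ)) ^ 2) ≤ (k : ℚ) * (r + (k - 1 : ℕ) * t) := by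
    calc (∑ x ∈ U, ((d x : ℚ)) ^ 2) = ((∑ x ∈ U, (d x) ^ 2 : ℕ) : ℚ) := by push_cast; ring
      _ ≤ ((k * (r + (k - 1) * t) : ℕ) : ℚ) := by exact_mod_cast h3
      _ = (k : ℚ) * (r + (k - 1 : ℕ) * t) := by push_cast; ring
  have hcast : ((k - 1 : ℕ) : ℚ) = (k : ℚ) - 1 := by
    have : (1 : ℕ) ≤ k := hk
    push_cast [this]; ring
  have hm : ((k : ℚ) * r) ^ 2 ≤ (U.card : ℚ) * ((k : ℚ) * (r + ((k : ℚ) - 1) * t)) := by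
    have := hCS.trans (mul_le_mul_of_nonneg_left h2Q (by positivity))
    rw [h1] at this
    push_cast at this ⊢
    rw [hcast] at this
    convert this using 2
  have hden : (0 : ℚ) < r + ((k : ℚ) - 1) * t := by
    have h1k : (1 : ℚ) ≤ k := by exact_mod_cast hk
    have : (0 : ℚ) ≤ ((k : ℚ) - 1) * t := by
      apply mul_nonneg (by linarith) (by positivity)
    have hrQ : (0 : ℚ) < r := by exact_mod_cast hr
    linarith
  rw [div_le_iff₀ hden]
  have hkQ : (0 : ℚ) < k := by exact_mod_cast hk
  nlinarith [hm, mul_pos hkQ hden]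
end

section
/- Let G be a finite Abelian group in which every nonzero element has order at least 5, and let P̃(x) = a_0 + Σ_{i=1}^k a_i x_{j_i} be a degree-1 polynomial over G with k distinct variables, all coefficients a_1,...,a_k nonzero. If Pr_{x∼{0,1}^n}[P̃(x) = 0] ≥ 1/4 − 0.001, then k ≤ C_0 for an absolute constant C_0 (C_0 = 4500 suffices). -/
open Finset

namespace Stmt11Aux

-- χ of a finite sum is a product
lemma addChar_map_sum {A M : Type*} [AddCommMonoid A] [CommMonoid M] (χ : AddChar A M)
    {ι : Type*} (s : Finset ι) (f : ι → A) :
    χ (∑ i ∈ s, f i) = ∏ i ∈ s, χ (f i) := by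
  classical
  induction s using Finset.cons_induction with
  | empty => simp
  | cons i s hi ih => rw [Finset.sum_cons, Finset.prod_cons, AddChar.map_add_eq_mul, ih]

-- pointwise kernel identity
lemma kernel_identity (w : ℂ) (hw : ‖w‖ = 1) :
    ((4 * w.re ^ 2 + 2 * w.re - 1) ^ 2 : ℝ)
      = 2 * (w ^ 4).re + 4 * (w ^ 3).re + 6 * (w ^ 2).re + 8 * w.re + 5 := by
  have h : w.re ^ 2 + w.im ^ 2 = 1 := by
    have h2 : ‖w‖ ^ 2 = 1 := by rw [hw]; norm_num
    rw [Complex.sq_norm, Complex.normSq_apply] at h2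
    nlinarith [h2]
  have h2 : (w ^ 2).re = w.re ^ 2 - w.im ^ 2 := by
    simp [pow_two, Complex.mul_re]; try ring
  have h3 : (w ^ 3).re = w.re ^ 3 - 3 * w.re * w.im ^ 2 := by
    have : w ^ 3 = w * w * w := by ring
    rw [this]; simp [Complex.mul_re, Complex.mul_im]; try ring
  have h4 : (w ^ 4).re = w.re ^ 4 - 6 * w.re ^ 2 * w.im ^ 2 + w.im ^ 4 := by
    have : w ^ 4 = w * w * (w * w) := by ring
    rw [this]; simp [Complex.mul_re, Complex.mul_im]; try ring
  rw [h2, h3, h4]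
  linear_combination (14 * w.re ^ 2 - 2 * w.im ^ 2 + 12 * w.re + 4) * h


variable {G : Type*} [AddCommGroup G] [Fintype G]

lemma counting (b : G) (hord : 5 ≤ addOrderOf b) :
    ((univ.filter fun χ : AddChar G ℂ => (0.96 : ℝ) < (χ b).re).card : ℝ) * 8288641
      ≤ 1953125 * (Fintype.card G : ℝ) := by
  classical
  have hsum : ∀ m : ℕ, 0 < m → m < 5 → (∑ χ : AddChar G ℂ, (χ b) ^ m) = 0 := by
    intro m hm hm5
    have hmb : m • b ≠ 0 := by
      intro hzero
      have h1 := Nat.le_of_dvd hm (addOrderOf_dvd_of_nsmul_eq_zero hzero)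
      omega
    calc ∑ χ : AddChar G ℂ, (χ b) ^ m = ∑ χ : AddChar G ℂ, χ (m • b) := by
          simp [AddChar.map_nsmul_eq_pow]
      _ = 0 := by rw [AddChar.sum_apply_eq_ite]; simp [hmb]
  have e4 : ∑ χ : AddChar G ℂ, ((χ b) ^ 4).re = 0 := by
    rw [← Complex.re_sum, hsum 4 (by norm_num) (by norm_num)]; simp
  have e3 : ∑ χ : AddChar G ℂ, ((χ b) ^ 3).re = 0 := by
    rw [← Complex.re_sum, hsum 3 (by norm_num) (by norm_num)]; simp
  have e2 : ∑ χ : AddChar G ℂ, ((χ b) ^ 2).re = 0 := by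
    rw [← Complex.re_sum, hsum 2 (by norm_num) (by norm_num)]; simp
  have e1 : ∑ χ : AddChar G ℂ, (χ b).re = 0 := by
    have := hsum 1 (by norm_num) (by norm_num)
    simp only [pow_one] at this
    rw [← Complex.re_sum, this]; simp
  have hT : ∑ χ : AddChar G ℂ, ((4 * (χ b).re ^ 2 + 2 * (χ b).re - 1) ^ 2 : ℝ)
      = 5 * (Fintype.card G : ℝ) := by
    rw [Finset.sum_congr rfl (fun χ _ => kernel_identity (χ b) (χ.norm_apply b))]
    simp only [Finset.sum_add_distrib, ← Finset.mul_sum, e4, e3, e2, e1, Finset.sum_const,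
      Finset.card_univ, AddChar.card_eq, nsmul_eq_mul]
    ring
  set s := univ.filter fun χ : AddChar G ℂ => (0.96 : ℝ) < (χ b).re with hs
  have hlow : (s.card : ℝ) * ((2879 / 625 : ℝ) ^ 2)
      ≤ ∑ χ : AddChar G ℂ, ((4 * (χ b).re ^ 2 + 2 * (χ b).re - 1) ^ 2 : ℝ) := by
    have h1 : (s.card : ℝ) * ((2879 / 625 : ℝ) ^ 2)
        ≤ ∑ χ ∈ s, ((4 * (χ b).re ^ 2 + 2 * (χ b).re - 1) ^ 2 : ℝ) := by
      have step : s.card • ((2879 / 625 : ℝ) ^ 2)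
          ≤ ∑ χ ∈ s, ((4 * (χ b).re ^ 2 + 2 * (χ b).re - 1) ^ 2 : ℝ) := by
        refine Finset.card_nsmul_le_sum s _ _ (fun χ hχ => ?_)
        have hre : (0.96 : ℝ) < (χ b).re := by
          simpa [hs] using (Finset.mem_filter.mp hχ).2
        have hre1 : (χ b).re ≤ 1 := by
          have := Complex.re_le_norm (χ b)
          rwa [χ.norm_apply b] at this
        have hq : (2879 / 625 : ℝ) ≤ 4 * (χ b).re ^ 2 + 2 * (χ b).re - 1 := by nlinarith
        exact pow_le_pow_left₀ (by norm_num) hq 2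
      rw [nsmul_eq_mul] at step
      linarith [step]
    refine h1.trans (Finset.sum_le_sum_of_subset_of_nonneg (Finset.subset_univ s)
      (fun χ _ _ => sq_nonneg _))
  rw [hT] at hlow
  nlinarith [hlow]



lemma sum_prod_comp {n k : ℕ} (jv : Fin k → Fin n) (hinj : Function.Injective jv)
    (g : Fin k → Bool → ℂ) :
    ∑ x : Fin n → Bool, ∏ i, g i (x (jv i))
      = 2 ^ (n - k) * ∏ i, (g i false + g i true) := by
  classical
  let e : ((Fin k → Bool) × ({j : Fin n // j ∉ Set.range jv} → Bool)) ≃ (Fin n → Bool) :=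
    { toFun := fun p j => if h : j ∈ Set.range jv then p.1 h.choose else p.2 ⟨j, h⟩
      invFun := fun x => (fun i => x (jv i), fun j => x j.1)
      left_inv := by
        rintro ⟨y, z⟩
        ext i
        · have h : jv i ∈ Set.range jv := ⟨i, rfl⟩
          simp only [dif_pos h]
          congr 1
          exact hinj h.choose_spec
        · simp only
          rw [dif_neg i.2]
      right_inv := by
        intro x
        funext j
        by_cases h : j ∈ Set.range jv
        · simp only [dif_pos h]
          congr 1
          exact h.choose_spec
        · simp only [dif_neg h] }
  have he : ∀ (p : (Fin k → Bool) × ({j : Fin n // j ∉ Set.range jv} → Bool)) (i : Fin k),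
      e p (jv i) = p.1 i := by
    intro p i
    have h : jv i ∈ Set.range jv := ⟨i, rfl⟩
    show (if h : jv i ∈ Set.range jv then p.1 h.choose else p.2 ⟨jv i, h⟩) = p.1 i
    rw [dif_pos h]
    exact congrArg p.1 (hinj h.choose_spec)
  rw [← Equiv.sum_comp e (fun x => ∏ i, g i (x (jv i)))]
  have : ∀ p : ((Fin k → Bool) × ({j : Fin n // j ∉ Set.range jv} → Bool)),
      (∏ i, g i (e p (jv i))) = ∏ i, g i (p.1 i) := by
    intro p; exact Finset.prod_congr rfl fun i _ => by rw [he p i]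
  rw [Finset.sum_congr rfl fun p _ => this p]
  rw [Fintype.sum_prod_type]
  have hcard : Fintype.card {j : Fin n // j ∉ Set.range jv} = n - k := by
    rw [Fintype.card_subtype_compl]
    congr 1
    · exact Fintype.card_fin n
    · rw [Set.card_range_of_injective hinj, Fintype.card_fin]
  calc ∑ y : Fin k → Bool, ∑ _z : {j : Fin n // j ∉ Set.range jv} → Bool, ∏ i, g i (y i)
      = ∑ y : Fin k → Bool, (2 ^ (n - k) : ℂ) * ∏ i, g i (y i) := by
        refine Finset.sum_congr rfl fun y _ => ?_
        rw [Finset.sum_const, Finset.card_univ, Fintype.card_fun, hcard, Fintype.card_bool,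
          nsmul_eq_mul]
        push_cast
        ring
    _ = 2 ^ (n - k) * ∑ y : Fin k → Bool, ∏ i, g i (y i) := by rw [← Finset.mul_sum]
    _ = 2 ^ (n - k) * ∏ i, (g i false + g i true) := by
        congr 1
        rw [← Fintype.prod_sum fun i b => g i b]
        exact Finset.prod_congr rfl fun i _ => by rw [Fintype.sum_bool]; ring



lemma pointwise_layer {k : ℕ} (B : ℕ) :
    (0.99 : ℝ) ^ B ≤ (0.367 : ℝ) ^ 15
      + ∑ j ∈ range 15, ((0.367 : ℝ) ^ j - (0.367 : ℝ) ^ (j + 1))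
          * (if B < 100 * (j + 1) then (1 : ℝ) else 0) := by
  have hbase : ((0.99 : ℝ) ^ 100) ≤ 0.367 := by norm_num
  have h99 : (0 : ℝ) ≤ 0.99 := by norm_num
  have h991 : (0.99 : ℝ) ≤ 1 := by norm_num
  by_cases hB : 1500 ≤ B
  · have hind : ∀ j ∈ range 15, ((0.367 : ℝ) ^ j - (0.367 : ℝ) ^ (j + 1))
        * (if B < 100 * (j + 1) then (1 : ℝ) else 0) = 0 := by
      intro j hj
      rw [Finset.mem_range] at hj
      rw [if_neg (by omega), mul_zero]
    rw [Finset.sum_congr rfl hind, Finset.sum_const_zero, add_zero]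
    calc (0.99 : ℝ) ^ B ≤ (0.99 : ℝ) ^ 1500 := pow_le_pow_of_le_one h99 h991 hB
      _ = ((0.99 : ℝ) ^ 100) ^ 15 := by rw [← pow_mul]
      _ ≤ (0.367 : ℝ) ^ 15 := pow_le_pow_left₀ (by positivity) hbase 15
  · push_neg at hB
    set j0 := B / 100 with hj0def
    have hj0 : j0 ≤ 14 := by omega
    have hind : ∀ j, (if B < 100 * (j + 1) then (1 : ℝ) else 0)
        = if j0 ≤ j then 1 else 0 := by
      intro j
      have : B < 100 * (j + 1) ↔ j0 ≤ j := by
        rw [hj0def]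
        constructor
        · intro hlt; omega
        · intro hle; omega
      simp [this]
    have htel : ∑ j ∈ range 15, ((0.367 : ℝ) ^ j - (0.367 : ℝ) ^ (j + 1))
        * (if B < 100 * (j + 1) then (1 : ℝ) else 0)
        = (0.367 : ℝ) ^ j0 - (0.367 : ℝ) ^ 15 := by
      have hterm : ∀ j, ((0.367 : ℝ) ^ j - (0.367 : ℝ) ^ (j + 1))
          * (if B < 100 * (j + 1) then (1 : ℝ) else 0)
          = (0.367 : ℝ) ^ (max j j0) - (0.367 : ℝ) ^ (max (j + 1) j0) := by
        intro j
        rw [hind j]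
        by_cases hle : j0 ≤ j
        · rw [if_pos hle, mul_one, max_eq_left hle, max_eq_left (by omega)]
        · rw [if_neg hle, mul_zero, max_eq_right (by omega), max_eq_right (by omega), sub_self]
      rw [Finset.sum_congr rfl fun j _ => hterm j]
      rw [Finset.sum_range_sub' (fun j => (0.367 : ℝ) ^ (max j j0)) 15]
      rw [max_eq_right (by omega), max_eq_left (by omega)]
    rw [htel]
    have : (0.99 : ℝ) ^ B ≤ (0.367 : ℝ) ^ j0 := by
      calc (0.99 : ℝ) ^ B ≤ (0.99 : ℝ) ^ (100 * j0) :=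
            pow_le_pow_of_le_one h99 h991 (by omega)
        _ = ((0.99 : ℝ) ^ 100) ^ j0 := by rw [← pow_mul]
        _ ≤ (0.367 : ℝ) ^ j0 := pow_le_pow_left₀ (by positivity) hbase j0
    linarith

lemma layered {ι : Type*} [Fintype ι] [DecidableEq ι] (k : ℕ) (hk : 4501 ≤ k) (Gc : ι → ℕ)
    (hsum : ∑ χ : ι, (Gc χ : ℝ)
      ≤ (1953125 / 8288641 : ℝ) * k * (Fintype.card ι : ℝ)) :
    ∑ χ : ι, (0.99 : ℝ) ^ (k - Gc χ) ≤ 0.248 * (Fintype.card ι : ℝ) := by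
  classical
  set N : ℝ := (Fintype.card ι : ℝ) with hN
  have hN0 : 0 ≤ N := by positivity
  set β : ℝ := (1953125 / 8288641 : ℝ) with hβ
  -- Markov bound for each level
  have markov : ∀ j ∈ range 15,
      ((univ.filter fun χ : ι => k - Gc χ < 100 * (j + 1)).card : ℝ)
        ≤ β * (4501 / (4501 - 100 * ((j : ℝ) + 1))) * N := by
    intro j hj
    rw [Finset.mem_range] at hj
    set A := univ.filter fun χ : ι => k - Gc χ < 100 * (j + 1) with hA
    have hc : (0 : ℝ) < (k : ℝ) - 100 * ((j : ℝ) + 1) := by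
      have : (k : ℝ) ≥ 4501 := by exact_mod_cast hk
      have : ((j : ℝ)) ≤ 14 := by exact_mod_cast Nat.le_of_lt_succ hj
      nlinarith
    have hm : (A.card : ℝ) * ((k : ℝ) - 100 * ((j : ℝ) + 1)) ≤ β * k * N := by
      have step1 : ∀ χ ∈ A, ((k : ℝ) - 100 * ((j : ℝ) + 1)) ≤ (Gc χ : ℝ) := by
        intro χ hχ
        rw [hA, Finset.mem_filter] at hχ
        have : k < Gc χ + 100 * (j + 1) := by omega
        have : (k : ℝ) < (Gc χ : ℝ) + 100 * ((j : ℝ) + 1) := by exact_mod_cast this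
        linarith
      calc (A.card : ℝ) * ((k : ℝ) - 100 * ((j : ℝ) + 1))
          = ∑ _χ ∈ A, ((k : ℝ) - 100 * ((j : ℝ) + 1)) := by
            rw [Finset.sum_const, nsmul_eq_mul]
        _ ≤ ∑ χ ∈ A, (Gc χ : ℝ) := Finset.sum_le_sum step1
        _ ≤ ∑ χ : ι, (Gc χ : ℝ) := Finset.sum_le_sum_of_subset_of_nonneg
            (Finset.subset_univ A) (fun χ _ _ => by positivity)
        _ ≤ β * k * N := hsum
    have hk' : (4501 : ℝ) ≤ (k : ℝ) := by exact_mod_cast hk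
    have hj' : ((j : ℝ)) ≤ 14 := by exact_mod_cast Nat.le_of_lt_succ hj
    have hc2 : (0 : ℝ) < 4501 - 100 * ((j : ℝ) + 1) := by nlinarith
    have hcard : (0 : ℝ) ≤ (A.card : ℝ) := by positivity
    rw [mul_comm β, mul_assoc, ← le_div_iff₀ hc] at hm
    refine hm.trans ?_
    rw [div_le_iff₀ hc, hβ]
    have hβ0 : (0 : ℝ) < (1953125 / 8288641 : ℝ) := by norm_num
    have key : (k : ℝ) * (4501 - 100 * ((j : ℝ) + 1)) ≤ 4501 * ((k : ℝ) - 100 * ((j : ℝ) + 1)) := by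
      nlinarith
    calc (k : ℝ) * ((1953125 / 8288641 : ℝ) * N)
        = (1953125 / 8288641 : ℝ) * N * k := by ring
      _ ≤ (1953125 / 8288641 : ℝ) * N * ((4501 * ((k : ℝ) - 100 * ((j : ℝ) + 1)))
            / (4501 - 100 * ((j : ℝ) + 1))) := by
          refine mul_le_mul_of_nonneg_left ?_ (by positivity)
          rw [le_div_iff₀ hc2]
          nlinarith
      _ = (1953125 / 8288641 : ℝ) * (4501 / (4501 - 100 * ((j : ℝ) + 1))) * N
            * ((k : ℝ) - 100 * ((j : ℝ) + 1)) := by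
          field_simp
  -- pointwise bound and summation
  have hpt := fun χ : ι => pointwise_layer (k := k) (k - Gc χ)
  calc ∑ χ : ι, (0.99 : ℝ) ^ (k - Gc χ)
      ≤ ∑ χ : ι, ((0.367 : ℝ) ^ 15
        + ∑ j ∈ range 15, ((0.367 : ℝ) ^ j - (0.367 : ℝ) ^ (j + 1))
            * (if k - Gc χ < 100 * (j + 1) then (1 : ℝ) else 0)) :=
        Finset.sum_le_sum fun χ _ => hpt χ
    _ = N * (0.367 : ℝ) ^ 15
        + ∑ j ∈ range 15, ((0.367 : ℝ) ^ j - (0.367 : ℝ) ^ (j + 1))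
            * ((univ.filter fun χ : ι => k - Gc χ < 100 * (j + 1)).card : ℝ) := by
        rw [Finset.sum_add_distrib, Finset.sum_const, Finset.card_univ, nsmul_eq_mul]
        congr 1
        rw [Finset.sum_comm]
        refine Finset.sum_congr rfl fun j _ => ?_
        rw [← Finset.mul_sum]
        congr 1
        rw [Finset.sum_boole]
    _ ≤ N * (0.367 : ℝ) ^ 15
        + ∑ j ∈ range 15, ((0.367 : ℝ) ^ j - (0.367 : ℝ) ^ (j + 1))
            * (β * (4501 / (4501 - 100 * ((j : ℝ) + 1))) * N) := by
        refine add_le_add (le_refl _) (Finset.sum_le_sum fun j hj => ?_)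
        refine mul_le_mul_of_nonneg_left (markov j hj) ?_
        have : (0.367 : ℝ) ^ (j + 1) ≤ (0.367 : ℝ) ^ j :=
          pow_le_pow_of_le_one (by norm_num) (by norm_num) (by omega)
        linarith
    _ ≤ 0.248 * N := by
        have expand : ∑ j ∈ range 15, ((0.367 : ℝ) ^ j - (0.367 : ℝ) ^ (j + 1))
            * (β * (4501 / (4501 - 100 * ((j : ℝ) + 1))) * N)
            = (∑ j ∈ range 15, ((0.367 : ℝ) ^ j - (0.367 : ℝ) ^ (j + 1))
            * (β * (4501 / (4501 - 100 * ((j : ℝ) + 1))))) * N := by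
          rw [Finset.sum_mul]
          exact Finset.sum_congr rfl fun j _ => by ring
        rw [expand, hβ]
        have : ((0.367 : ℝ) ^ 15 + ∑ j ∈ range 15, ((0.367 : ℝ) ^ j - (0.367 : ℝ) ^ (j + 1))
            * ((1953125 / 8288641 : ℝ) * (4501 / (4501 - 100 * ((j : ℝ) + 1))))) ≤ 0.248 := by
          norm_num [Finset.sum_range_succ]
        nlinarith [this, hN0]



end Stmt11Aux

set_option maxHeartbeats 1600000 in
open Finset Stmt11Aux in
/-- Anti-concentration: over a finite abelian group in which every nonzero element has
order at least 5, a degree-1 polynomial with `k` nonzero coefficients on distinct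
variables that vanishes on at least a `1/4 - 0.001` fraction of the cube has
`k ≤ 4500`. -/
theorem stmt_11 (G : Type*) [AddCommGroup G] [Fintype G]
    (hG : ∀ g : G, g ≠ 0 → 5 ≤ addOrderOf g)
    (n k : ℕ) (a0 : G) (jv : Fin k → Fin n) (hinj : Function.Injective jv)
    (a : Fin k → G) (ha : ∀ i, a i ≠ 0)
    (h : ((1 : ℝ) / 4 - 0.001) * 2 ^ n ≤
      (Nat.card {x : Fin n → Bool |
        a0 + ∑ i, (if x (jv i) then a i else 0) = 0} : ℝ)) :
    k ≤ 4500 := by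
  classical
  by_contra hk'
  push_neg at hk'
  have hk : 4501 ≤ k := hk'
  have hkn : k ≤ n := by
    have := Fintype.card_le_of_injective jv hinj
    simpa using this
  set N : ℕ := Fintype.card G with hN
  have hN0 : 0 < N := Fintype.card_pos
  set P : (Fin n → Bool) → G := fun x => a0 + ∑ i, (if x (jv i) then a i else 0) with hP
  set S : Finset (Fin n → Bool) := univ.filter fun x => P x = 0 with hS
  -- identify the Nat.card with a Finset card
  have hcardeq : (Nat.card {x : Fin n → Bool | P x = 0} : ℝ) = (S.card : ℝ) := by
    congr 1
    rw [Nat.card_eq_fintype_card]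
    simp [hS, Fintype.card_subtype]
  -- the key character identity
  have key : (N : ℂ) * (S.card : ℂ)
      = ∑ χ : AddChar G ℂ, χ a0 * ((2 : ℂ) ^ (n - k) * ∏ i, (1 + χ (a i))) := by
    have swap : ∑ x : Fin n → Bool, ∑ χ : AddChar G ℂ, χ (P x)
        = ∑ χ : AddChar G ℂ, ∑ x : Fin n → Bool, χ (P x) := Finset.sum_comm
    have lhs_eval : ∑ x : Fin n → Bool, ∑ χ : AddChar G ℂ, χ (P x)
        = (N : ℂ) * (S.card : ℂ) := by
      have : ∀ x : Fin n → Bool, ∑ χ : AddChar G ℂ, χ (P x)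
          = if P x = 0 then (N : ℂ) else 0 := by
        intro x
        rw [AddChar.sum_apply_eq_ite, hN]
      rw [Finset.sum_congr rfl fun x _ => this x, Finset.sum_ite, Finset.sum_const,
        Finset.sum_const_zero, add_zero, nsmul_eq_mul]
      rw [hS]
      ring
    have rhs_eval : ∀ χ : AddChar G ℂ, ∑ x : Fin n → Bool, χ (P x)
        = χ a0 * ((2 : ℂ) ^ (n - k) * ∏ i, (1 + χ (a i))) := by
      intro χ
      have hx : ∀ x : Fin n → Bool, χ (P x)
          = χ a0 * ∏ i, (if x (jv i) then χ (a i) else 1) := by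
        intro x
        rw [hP]
        simp only [AddChar.map_add_eq_mul, addChar_map_sum]
        congr 1
        refine Finset.prod_congr rfl fun i _ => ?_
        by_cases hxi : x (jv i) <;> simp [hxi]
      rw [Finset.sum_congr rfl fun x _ => hx x, ← Finset.mul_sum]
      congr 1
      have := sum_prod_comp jv hinj (fun i b => if b then χ (a i) else 1)
      simpa using this
    rw [← lhs_eval, swap, Finset.sum_congr rfl fun χ _ => rhs_eval χ]
  -- good-coordinate counts
  set Gc : AddChar G ℂ → ℕ :=
    fun χ => (univ.filter fun i : Fin k => (0.96 : ℝ) < (χ (a i)).re).card with hGc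
  have hGck : ∀ χ, Gc χ ≤ k := by
    intro χ
    rw [hGc]
    simpa using Finset.card_filter_le univ fun i : Fin k => (0.96 : ℝ) < (χ (a i)).re
  -- product bound for each character
  have hprod : ∀ χ : AddChar G ℂ, ∏ i, ‖1 + χ (a i)‖ ≤ 2 ^ k * (0.99 : ℝ) ^ (k - Gc χ) := by
    intro χ
    have hfac : ∀ i : Fin k, ‖1 + χ (a i)‖
        ≤ (if (0.96 : ℝ) < (χ (a i)).re then (2 : ℝ) else 1.98) := by
      intro i
      have hz : ‖χ (a i)‖ = 1 := χ.norm_apply (a i)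
      by_cases hgood : (0.96 : ℝ) < (χ (a i)).re
      · rw [if_pos hgood]
        calc ‖1 + χ (a i)‖ ≤ ‖(1 : ℂ)‖ + ‖χ (a i)‖ := norm_add_le _ _
          _ = 2 := by rw [hz, norm_one]; norm_num
      · rw [if_neg hgood]
        push_neg at hgood
        have hsq : ‖1 + χ (a i)‖ ^ 2 ≤ (1.98 : ℝ) ^ 2 := by
          have h1 : ‖1 + χ (a i)‖ ^ 2 = 2 + 2 * (χ (a i)).re := by
            have e1 : ‖1 + χ (a i)‖ ^ 2 = Complex.normSq (1 + χ (a i)) := by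
              rw [Complex.sq_norm]
            have hz2 : (χ (a i)).re ^ 2 + (χ (a i)).im ^ 2 = 1 := by
              have e2 : ‖χ (a i)‖ ^ 2 = Complex.normSq (χ (a i)) := by
                rw [Complex.sq_norm]
              rw [hz] at e2
              simp only [Complex.normSq_apply] at e2
              nlinarith [e2]
            rw [e1]
            simp only [Complex.normSq_apply, Complex.add_re, Complex.add_im, Complex.one_re,
              Complex.one_im]
            nlinarith [hz2]
          rw [h1]
          nlinarith [hgood]
        nlinarith [hsq, norm_nonneg (1 + χ (a i))]
    calc ∏ i, ‖1 + χ (a i)‖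
        ≤ ∏ i, (if (0.96 : ℝ) < (χ (a i)).re then (2 : ℝ) else 1.98) :=
          Finset.prod_le_prod (fun i _ => norm_nonneg _) (fun i _ => hfac i)
      _ = 2 ^ Gc χ * (1.98 : ℝ) ^ (k - Gc χ) := by
          rw [Finset.prod_ite, Finset.prod_const, Finset.prod_const]
          have hcards := Finset.card_filter_add_card_filter_not
            (s := (univ : Finset (Fin k))) (p := fun i => (0.96 : ℝ) < (χ (a i)).re)
          simp only [Finset.card_univ, Fintype.card_fin] at hcards
          simp only [hGc]
          congr 1
          congr 1
          omega
      _ ≤ 2 ^ k * (0.99 : ℝ) ^ (k - Gc χ) := by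
          have h198 : (1.98 : ℝ) = 2 * 0.99 := by norm_num
          rw [h198, mul_pow, ← mul_assoc, ← pow_add]
          have hle := hGck χ
          have : Gc χ + (k - Gc χ) = k := by omega
          rw [this]
  -- sum of good counts
  have hGsum : ∑ χ : AddChar G ℂ, (Gc χ : ℝ)
      ≤ (1953125 / 8288641 : ℝ) * k * (Fintype.card (AddChar G ℂ) : ℝ) := by
    have hswap : ∑ χ : AddChar G ℂ, (Gc χ : ℝ)
        = ∑ i : Fin k, ((univ.filter fun χ : AddChar G ℂ =>
            (0.96 : ℝ) < (χ (a i)).re).card : ℝ) := by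
      have h1 : ∀ χ : AddChar G ℂ, (Gc χ : ℝ)
          = ∑ i : Fin k, (if (0.96 : ℝ) < (χ (a i)).re then (1 : ℝ) else 0) := by
        intro χ
        rw [hGc, Finset.sum_boole]
      rw [Finset.sum_congr rfl fun χ _ => h1 χ, Finset.sum_comm]
      refine Finset.sum_congr rfl fun i _ => ?_
      rw [Finset.sum_boole]
    rw [hswap]
    have hbound : ∀ i : Fin k, ((univ.filter fun χ : AddChar G ℂ =>
        (0.96 : ℝ) < (χ (a i)).re).card : ℝ) ≤ (1953125 / 8288641 : ℝ) * N := by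
      intro i
      have := counting (a i) (hG (a i) (ha i))
      rw [hN]
      linarith
    calc ∑ i : Fin k, ((univ.filter fun χ : AddChar G ℂ =>
          (0.96 : ℝ) < (χ (a i)).re).card : ℝ)
        ≤ ∑ _i : Fin k, (1953125 / 8288641 : ℝ) * N := Finset.sum_le_sum fun i _ => hbound i
      _ = (1953125 / 8288641 : ℝ) * k * N := by
          rw [Finset.sum_const, Finset.card_univ, Fintype.card_fin, nsmul_eq_mul]
          ring
      _ = (1953125 / 8288641 : ℝ) * k * (Fintype.card (AddChar G ℂ) : ℝ) := by
          rw [AddChar.card_eq, hN]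
  -- apply the layered bound
  have hlay := layered (ι := AddChar G ℂ) k hk Gc hGsum
  rw [AddChar.card_eq, ← hN] at hlay
  -- norm bound on the key identity
  have hnorm : (N : ℝ) * (S.card : ℝ) ≤ 2 ^ (n - k) * (2 ^ k * (0.248 * N)) := by
    have h0 : (N : ℝ) * (S.card : ℝ) = ‖(N : ℂ) * (S.card : ℂ)‖ := by
      rw [norm_mul, Complex.norm_natCast, Complex.norm_natCast]
    rw [h0, key]
    calc ‖∑ χ : AddChar G ℂ, χ a0 * ((2 : ℂ) ^ (n - k) * ∏ i, (1 + χ (a i)))‖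
        ≤ ∑ χ : AddChar G ℂ, ‖χ a0 * ((2 : ℂ) ^ (n - k) * ∏ i, (1 + χ (a i)))‖ :=
          norm_sum_le _ _
      _ = ∑ χ : AddChar G ℂ, 2 ^ (n - k) * ∏ i, ‖1 + χ (a i)‖ := by
          refine Finset.sum_congr rfl fun χ _ => ?_
          rw [norm_mul, χ.norm_apply, one_mul, norm_mul, norm_prod]
          congr 1
          rw [norm_pow]
          norm_num
      _ ≤ ∑ χ : AddChar G ℂ, 2 ^ (n - k) * (2 ^ k * (0.99 : ℝ) ^ (k - Gc χ)) := by
          refine Finset.sum_le_sum fun χ _ => ?_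
          refine mul_le_mul_of_nonneg_left (hprod χ) (by positivity)
      _ = 2 ^ (n - k) * (2 ^ k * ∑ χ : AddChar G ℂ, (0.99 : ℝ) ^ (k - Gc χ)) := by
          rw [← Finset.mul_sum, ← Finset.mul_sum]
      _ ≤ 2 ^ (n - k) * (2 ^ k * (0.248 * N)) := by
          refine mul_le_mul_of_nonneg_left ?_ (by positivity)
          refine mul_le_mul_of_nonneg_left ?_ (by positivity)
          exact hlay
  -- conclude
  have hpow : (2 : ℝ) ^ (n - k) * 2 ^ k = 2 ^ n := by
    rw [← pow_add, Nat.sub_add_cancel hkn]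
  have hfinal : (S.card : ℝ) ≤ 0.248 * 2 ^ n := by
    have hN0' : (0 : ℝ) < N := by exact_mod_cast hN0
    have h1 : (N : ℝ) * (S.card : ℝ) ≤ (N : ℝ) * (0.248 * 2 ^ n) := by
      calc (N : ℝ) * (S.card : ℝ) ≤ 2 ^ (n - k) * (2 ^ k * (0.248 * N)) := hnorm
        _ = (N : ℝ) * (0.248 * 2 ^ n) := by rw [← hpow]; ring
    exact le_of_mul_le_mul_left h1 hN0'
  rw [hP] at hcardeq
  rw [hcardeq] at h
  have h2n : (0 : ℝ) < 2 ^ n := by positivity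
  linarith [h, hfinal, h2n]
end

section
/- Let G be an Abelian group and f : {0,1}^n → G. Suppose P_1, ..., P_k are degree-1 polynomials over G, each agreeing with f on at least a 1/2 fraction of {0,1}^n, and pairwise agreeing on at most a (1/4 − 0.001) fraction of {0,1}^n. Then k ≤ 4002. -/
/-- Evaluation of a degree-1 polynomial `p = (a₀, a)` over `G` at a Boolean point. -/
def linEval {n : ℕ} {G : Type*} [AddCommGroup G] (p : G × (Fin n → G))
    (x : Fin n → Bool) : G :=
  p.1 + ∑ i, if x i then p.2 i else 0

/-- Degree-1 polynomials each agreeing with `f` on at least half the cube and pairwise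
agreeing on at most a `1/4 - 0.001` fraction number at most `4002`. -/
theorem stmt_12 (G : Type*) [AddCommGroup G] (n k : ℕ)
    (f : (Fin n → Bool) → G) (P : Fin k → G × (Fin n → G))
    (hagree : ∀ i, ((2 : ℚ) ^ n) ≤
      2 * Nat.card {x : Fin n → Bool | f x = linEval (P i) x})
    (hpair : ∀ i j, i ≠ j →
      (Nat.card {x : Fin n → Bool | linEval (P i) x = linEval (P j) x} : ℚ)
        ≤ (1 / 4 - 0.001) * 2 ^ n) :
    k ≤ 4002 := by
  classical
  by_contra hk
  push_neg at hk
  set X : Finset (Fin n → Bool) := Finset.univ with hX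
  have hXcard : (X.card : ℚ) = 2 ^ n := by simp [hX]
  set A : Fin k → Finset (Fin n → Bool) :=
    fun i => X.filter (fun x => f x = linEval (P i) x) with hA
  have hcard : ∀ i, (Nat.card {x : Fin n → Bool | f x = linEval (P i) x}) = (A i).card := by
    intro i
    rw [Nat.card_eq_card_toFinset, Set.toFinset_setOf]
  -- indicator
  set c : Fin k → (Fin n → Bool) → ℚ := fun i x => if x ∈ A i then 1 else 0 with hc
  have hsum1 : ∀ i, ∑ x ∈ X, c i x = (A i).card := by
    intro i
    simp [hc, Finset.sum_ite_mem, hX]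
  have hsum2 : ∀ i j, ∑ x ∈ X, c i x * c j x = ((A i ∩ A j).card : ℚ) := by
    intro i j
    have : ∀ x, c i x * c j x = if x ∈ A i ∩ A j then (1:ℚ) else 0 := by
      intro x
      simp only [hc, Finset.mem_inter]
      by_cases h1 : x ∈ A i <;> by_cases h2 : x ∈ A j <;> simp [h1, h2]
    simp only [this]
    have : X.filter (fun x => x ∈ A i ∩ A j) = A i ∩ A j := by
      ext x; simp [hX]
    rw [Finset.sum_ite_mem, hX, Finset.univ_inter]
    simp
  -- Cauchy-Schwarz
  have CS : (∑ x ∈ X, ∑ i, c i x) ^ 2 ≤ (X.card : ℚ) * ∑ x ∈ X, (∑ i, c i x) ^ 2 :=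
    sq_sum_le_card_mul_sum_sq
  -- lower bound on lhs
  have hlow : ∀ i, (2:ℚ)^n ≤ 2 * (A i).card := by
    intro i; have := hagree i; rwa [hcard i] at this
  have hL : (k : ℚ) * 2 ^ n ≤ 2 * ∑ x ∈ X, ∑ i, c i x := by
    rw [Finset.sum_comm]
    calc (k : ℚ) * 2 ^ n = ∑ _i : Fin k, (2:ℚ)^n := by simp [mul_comm]
    _ ≤ ∑ i : Fin k, 2 * ((A i).card : ℚ) := Finset.sum_le_sum fun i _ => hlow i
    _ = 2 * ∑ i : Fin k, ((A i).card : ℚ) := by rw [Finset.mul_sum]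
    _ = 2 * ∑ i : Fin k, ∑ x ∈ X, c i x := by simp [hsum1]
  -- upper bound on rhs
  have hInter : ∀ i j, i ≠ j → ((A i ∩ A j).card : ℚ) ≤ (1/4 - 0.001) * 2 ^ n := by
    intro i j hij
    refine le_trans ?_ (hpair i j hij)
    have hsub : A i ∩ A j ⊆ X.filter (fun x => linEval (P i) x = linEval (P j) x) := by
      intro x hx
      simp only [hA, Finset.mem_inter, Finset.mem_filter] at hx ⊢
      exact ⟨hx.1.1, hx.1.2 ▸ hx.2.2⟩
    have hc2 : Nat.card {x : Fin n → Bool | linEval (P i) x = linEval (P j) x}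
        = (X.filter (fun x => linEval (P i) x = linEval (P j) x)).card := by
      rw [Nat.card_eq_card_toFinset, Set.toFinset_setOf]
    rw [hc2]
    exact_mod_cast Finset.card_le_card hsub
  have hdiag : ∀ i, ((A i).card : ℚ) ≤ 2 ^ n := by
    intro i
    calc ((A i).card : ℚ) ≤ (X.card : ℚ) := by exact_mod_cast Finset.card_le_card (Finset.filter_subset _ _)
    _ = 2 ^ n := hXcard
  have hR : ∑ x ∈ X, (∑ i, c i x) ^ 2 ≤ (k:ℚ) * (2^n + ((k:ℚ) - 1) * ((1/4 - 0.001) * 2^n)) := by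
    have expand : ∑ x ∈ X, (∑ i, c i x) ^ 2 = ∑ i : Fin k, ∑ j : Fin k, ((A i ∩ A j).card : ℚ) := by
      have : ∀ x, (∑ i, c i x) ^ 2 = ∑ i : Fin k, ∑ j : Fin k, c i x * c j x := by
        intro x; rw [sq, Finset.sum_mul_sum]
      simp only [this]
      rw [Finset.sum_comm]
      refine Finset.sum_congr rfl fun i _ => ?_
      rw [Finset.sum_comm]
      exact Finset.sum_congr rfl fun j _ => hsum2 i j
    rw [expand]
    calc ∑ i : Fin k, ∑ j : Fin k, ((A i ∩ A j).card : ℚ)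
        ≤ ∑ _i : Fin k, ((2:ℚ)^n + ((k:ℚ) - 1) * ((1/4 - 0.001) * 2^n)) := by
          apply Finset.sum_le_sum
          intro i _
          have : ∑ j : Fin k, ((A i ∩ A j).card : ℚ)
              = ((A i ∩ A i).card : ℚ) + ∑ j ∈ Finset.univ.erase i, ((A i ∩ A j).card : ℚ) := by
            exact (Finset.add_sum_erase Finset.univ (fun j => ((A i ∩ A j).card : ℚ)) (Finset.mem_univ i)).symm
          rw [this]
          have h1 : ((A i ∩ A i).card : ℚ) ≤ 2^n := by
            rw [Finset.inter_self]; exact hdiag i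
          have h2 : ∑ j ∈ Finset.univ.erase i, ((A i ∩ A j).card : ℚ)
              ≤ ((k:ℚ) - 1) * ((1/4 - 0.001) * 2^n) := by
            calc ∑ j ∈ Finset.univ.erase i, ((A i ∩ A j).card : ℚ)
                ≤ ∑ _j ∈ Finset.univ.erase i, ((1/4 - 0.001) * 2^n : ℚ) := by
                  apply Finset.sum_le_sum
                  intro j hj
                  exact hInter i j (Ne.symm (Finset.ne_of_mem_erase hj))
              _ = ((k:ℚ) - 1) * ((1/4 - 0.001) * 2^n) := by
                  rw [Finset.sum_const, nsmul_eq_mul, Finset.card_erase_of_mem (Finset.mem_univ i),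
                    Finset.card_univ, Fintype.card_fin]
                  have hk1 : (1:ℕ) ≤ k := by omega
                  push_cast [Nat.cast_sub hk1]
                  ring
          linarith
      _ = (k:ℚ) * (2^n + ((k:ℚ) - 1) * ((1/4 - 0.001) * 2^n)) := by
          rw [Finset.sum_const, nsmul_eq_mul]; simp
  -- combine
  have hM : (0:ℚ) < 2 ^ n := by positivity
  have hkk : (4003 : ℚ) ≤ (k : ℚ) := by exact_mod_cast hk
  set S := ∑ x ∈ X, ∑ i, c i x with hS
  set M : ℚ := 2 ^ n with hMdef
  rw [hXcard] at CS
  have hS0 : 0 ≤ S := by nlinarith [hL, hM, hkk]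
  have h1 : ((k:ℚ) * M)^2 ≤ 4 * S^2 := by
    nlinarith [mul_self_le_mul_self (show (0:ℚ) ≤ (k:ℚ)*M by positivity) hL]
  have h2 : S^2 ≤ M * ((k:ℚ) * (M + ((k:ℚ) - 1) * ((1/4 - 0.001) * M))) :=
    le_trans CS (mul_le_mul_of_nonneg_left hR (le_of_lt hM))
  have h3 : ((k:ℚ))^2 * M^2 ≤ (4 * (k:ℚ) * (1 + (1/4 - 0.001) * ((k:ℚ) - 1))) * M^2 := by
    nlinarith [h1, h2]
  have h4 : ((k:ℚ))^2 ≤ 4 * (k:ℚ) * (1 + (1/4 - 0.001) * ((k:ℚ) - 1)) :=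
    le_of_mul_le_mul_right (by nlinarith [h3]) (mul_pos hM hM)
  nlinarith [h4, hkk]
end

section
/- Let q be a prime and let L_1(x) = 0, ..., L_m(x) = 0 be a system of affine-linear equations over ℤ_q in variables x_1,...,x_n. If the number of Boolean solutions x ∈ {0,1}^n satisfying all equations exceeds 2^{n−r}, then the dimension of the span of {L_1, ..., L_m} (as affine-linear forms over ℤ_q, i.e., vectors of n+1 coordinates including the constant term) is strictly less than r. -/
namespace Stmt13

variable (q : ℕ) [Fact (Nat.Prime q)]

/-- Evaluation of an affine-linear form at a Boolean point, as a linear map in the form. -/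
def bEval {n : ℕ} (x : Fin n → Bool) : (Fin (n + 1) → ZMod q) →ₗ[ZMod q] ZMod q where
  toFun c := c 0 + ∑ j : Fin n, (if x j then c j.succ else 0)
  map_add' c d := by
    have h : ∀ j : Fin n, (if x j then c j.succ + d j.succ else 0) =
        (if x j then c j.succ else 0) + (if x j then d j.succ else 0) := by
      intro j; split <;> simp
    simp only [Pi.add_apply, h, Finset.sum_add_distrib]
    ring
  map_smul' t c := by
    have h : ∀ j : Fin n, (if x j then t * c j.succ else 0) =
        t * (if x j then c j.succ else 0) := by
      intro j; split <;> simp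
    simp only [Pi.smul_apply, smul_eq_mul, RingHom.id_apply, h, ← Finset.mul_sum]
    ring

/-- Substituting value `t` for the first variable. -/
def rho (n : ℕ) (t : ZMod q) : (Fin (n + 2) → ZMod q) →ₗ[ZMod q] (Fin (n + 1) → ZMod q) where
  toFun c := Fin.cons (c 0 + t * c 1) (fun j => c j.succ.succ)
  map_add' c d := by
    funext i
    refine Fin.cases ?_ (fun j => ?_) i <;> simp <;> ring
  map_smul' s c := by
    funext i
    refine Fin.cases ?_ (fun j => ?_) i <;> simp <;> ring

lemma bEval_cons {n : ℕ} (b : Bool) (y : Fin n → Bool) (c : Fin (n + 2) → ZMod q) :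
    bEval q (Fin.cons b y) c = bEval q y (rho q n (if b then 1 else 0) c) := by
  simp only [bEval, rho, LinearMap.coe_mk, AddHom.coe_mk, Fin.sum_univ_succ, Fin.cons_zero,
    Fin.cons_succ]
  cases b <;> simp <;> ring


def kvec (n : ℕ) (t : ZMod q) : Fin (n + 2) → ZMod q :=
  Fin.cons (-t) (Fin.cons 1 0)

lemma ker_rho_le (n : ℕ) (t : ZMod q) :
    LinearMap.ker (rho q n t) ≤ Submodule.span (ZMod q) {kvec q n t} := by
  intro c hc
  have hc' : Fin.cons (c 0 + t * c 1) (fun j : Fin n => c j.succ.succ)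
      = (0 : Fin (n + 1) → ZMod q) := hc
  have h0 : c 0 + t * c 1 = 0 := by
    have := congrFun hc' 0; simpa using this
  have hs : ∀ j : Fin n, c j.succ.succ = 0 := by
    intro j
    have := congrFun hc' j.succ; simpa using this
  rw [Submodule.mem_span_singleton]
  refine ⟨c 1, ?_⟩
  funext i
  refine Fin.cases ?_ (fun j => ?_) i
  · simp only [kvec, Pi.smul_apply, Fin.cons_zero, smul_eq_mul]
    linear_combination -h0
  · refine Fin.cases ?_ (fun j' => ?_) j
    · simp [kvec]
    · simp [kvec, hs j']

lemma kvec_ne_zero (n : ℕ) (t : ZMod q) : kvec q n t ≠ 0 := by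
  haveI : Fact (1 < q) := ⟨(Fact.out (p := q.Prime)).one_lt⟩
  intro h
  have := congrFun h ((0 : Fin (n+1)).succ)
  simp [kvec] at this

lemma finrank_inf_ker_le (n : ℕ) (t : ZMod q)
    (V : Submodule (ZMod q) (Fin (n + 2) → ZMod q)) :
    Module.finrank (ZMod q) ↥(LinearMap.ker (rho q n t) ⊓ V) ≤ 1 := by
  haveI : Fact (1 < q) := ⟨(Fact.out (p := q.Prime)).one_lt⟩
  calc Module.finrank (ZMod q) ↥(LinearMap.ker (rho q n t) ⊓ V)
      ≤ Module.finrank (ZMod q) ↥(Submodule.span (ZMod q) {kvec q n t}) :=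
        Submodule.finrank_mono (le_trans inf_le_left (ker_rho_le q n t))
    _ = 1 := finrank_span_singleton (kvec_ne_zero q n t)

set_option synthInstance.maxHeartbeats 1000000 in
lemma finrank_eq (n : ℕ) (t : ZMod q) (V : Submodule (ZMod q) (Fin (n + 2) → ZMod q)) :
    Module.finrank (ZMod q) ↥V
      = Module.finrank (ZMod q) ↥(V.map (rho q n t))
        + Module.finrank (ZMod q) ↥(LinearMap.ker (rho q n t) ⊓ V) := by
  have h := LinearMap.finrank_range_add_finrank_ker ((rho q n t).domRestrict V)
  rw [LinearMap.range_domRestrict, LinearMap.ker_domRestrict] at h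
  have e : Submodule.comap V.subtype (LinearMap.ker (rho q n t))
      = Submodule.comap V.subtype (LinearMap.ker (rho q n t) ⊓ V) := by
    ext x; simp [x.2]
  rw [e] at h
  have e2 : Module.finrank (ZMod q) ↥(Submodule.comap V.subtype (LinearMap.ker (rho q n t) ⊓ V))
      = Module.finrank (ZMod q) ↥(LinearMap.ker (rho q n t) ⊓ V) :=
    (Submodule.comapSubtypeEquivOfLe
      (inf_le_right : LinearMap.ker (rho q n t) ⊓ V ≤ V)).finrank_eq
  rw [e2] at h
  omega

lemma mem_of_ne_bot {n : ℕ} {t : ZMod q} {V : Submodule (ZMod q) (Fin (n + 2) → ZMod q)}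
    (h : LinearMap.ker (rho q n t) ⊓ V ≠ ⊥) : kvec q n t ∈ V := by
  obtain ⟨c, hc, hc0⟩ := (Submodule.ne_bot_iff _).1 h
  obtain ⟨a, ha⟩ := Submodule.mem_span_singleton.1 (ker_rho_le q n t (hc.1))
  have ha0 : a ≠ 0 := by rintro rfl; simp at ha; exact hc0 ha.symm
  have : kvec q n t = a⁻¹ • c := by rw [← ha, smul_smul, inv_mul_cancel₀ ha0, one_smul]
  rw [this]
  exact V.smul_mem _ hc.2

lemma bEval_cons_kvec {n : ℕ} (b : Bool) (y : Fin n → Bool) (t : ZMod q) :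
    bEval q (Fin.cons b y) (kvec q n t) = -t + (if b then 1 else 0) := by
  rw [bEval_cons]
  simp only [bEval, rho, kvec, LinearMap.coe_mk, AddHom.coe_mk]
  simp [Fin.cons_zero, Fin.cons_succ]


def SolP {n : ℕ} (V : Submodule (ZMod q) (Fin (n + 1) → ZMod q)) (x : Fin n → Bool) : Prop :=
  ∀ c ∈ V, bEval q x c = 0

lemma solP_cons {n : ℕ} (b : Bool) (y : Fin n → Bool)
    (V : Submodule (ZMod q) (Fin (n + 2) → ZMod q)) :
    SolP q (V.map (rho q n (if b then 1 else 0))) y ↔ SolP q V (Fin.cons b y) := by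
  constructor
  · intro h c hc
    rw [bEval_cons]
    exact h _ (Submodule.mem_map_of_mem hc)
  · rintro h c' ⟨c, hc, rfl⟩
    rw [← bEval_cons]
    exact h c hc

/-- Split a count over Boolean vectors according to the first coordinate. -/
lemma card_split {n : ℕ} (P : (Fin (n + 1) → Bool) → Prop) :
    Nat.card {x : Fin (n + 1) → Bool | P x}
      = Nat.card {y : Fin n → Bool | P (Fin.cons false y)}
        + Nat.card {y : Fin n → Bool | P (Fin.cons true y)} := by
  rw [← Nat.card_sum]
  refine Nat.card_congr ⟨?_, ?_, ?_, ?_⟩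
  · refine fun x => if h : x.1 0 = true then Sum.inr ⟨Fin.tail x.1, ?_⟩
      else Sum.inl ⟨Fin.tail x.1, ?_⟩
    · show P (Fin.cons true (Fin.tail x.1))
      rw [← h, Fin.cons_self_tail]; exact x.2
    · show P (Fin.cons false (Fin.tail x.1))
      have hx0 : x.1 0 = false := by cases hx : x.1 0 <;> simp_all
      rw [← hx0, Fin.cons_self_tail]; exact x.2
  · exact Sum.elim (fun y => ⟨Fin.cons false y.1, y.2⟩) (fun y => ⟨Fin.cons true y.1, y.2⟩)
  · intro x
    by_cases h : x.1 0 = true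
    · simp only [dif_pos h, Sum.elim_inr]
      refine Subtype.ext ?_
      show Fin.cons true (Fin.tail x.1) = x.1
      rw [← h, Fin.cons_self_tail]
    · simp only [dif_neg h, Sum.elim_inl]
      refine Subtype.ext ?_
      show Fin.cons false (Fin.tail x.1) = x.1
      have hx0 : x.1 0 = false := by cases hx : x.1 0 <;> simp_all
      rw [← hx0, Fin.cons_self_tail]
  · rintro (⟨y, hy⟩ | ⟨y, hy⟩)
    · simp only [Sum.elim_inl]
      simp only [Fin.cons_zero, Bool.false_eq_true, ↓reduceDIte]
      exact congrArg Sum.inl (Subtype.ext (by simp))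
    · simp only [Sum.elim_inr]
      simp only [Fin.cons_zero, ↓reduceDIte]
      exact congrArg Sum.inr (Subtype.ext (by simp))

lemma arith1 (N0 N1 d n : ℕ) (h0 : N0 * 2 ^ d ≤ 2 ^ n) (h1 : N1 * 2 ^ d ≤ 2 ^ n) :
    (N0 + N1) * 2 ^ d ≤ 2 ^ (n + 1) := by
  rw [add_mul, pow_succ]
  omega

lemma arith2 (N d d0 n : ℕ) (hd : d ≤ d0 + 1) (h : N * 2 ^ d0 ≤ 2 ^ n) :
    N * 2 ^ d ≤ 2 ^ (n + 1) :=
  calc N * 2 ^ d ≤ N * 2 ^ (d0 + 1) :=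
        Nat.mul_le_mul_left _ (Nat.pow_le_pow_right (by norm_num) hd)
    _ = N * 2 ^ d0 * 2 := by ring
    _ ≤ 2 ^ n * 2 := Nat.mul_le_mul_right _ h
    _ = 2 ^ (n + 1) := by ring

lemma key : ∀ (n : ℕ) (V : Submodule (ZMod q) (Fin (n + 1) → ZMod q)),
    Nat.card {x : Fin n → Bool | SolP q V x} * 2 ^ Module.finrank (ZMod q) ↥V ≤ 2 ^ n := by
  haveI : Fact (1 < q) := ⟨(Fact.out (p := q.Prime)).one_lt⟩
  intro n
  induction n with
  | zero =>
    intro V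
    by_cases hV : V = ⊥
    · subst hV
      simp only [finrank_bot, pow_zero, mul_one]
      have h1 : Nat.card {x : Fin 0 → Bool | SolP q ⊥ x} ≤ Nat.card (Fin 0 → Bool) :=
        Nat.card_le_card_of_injective _ Subtype.val_injective
      simpa using h1
    · obtain ⟨c, hc, hc0⟩ := (Submodule.ne_bot_iff _).1 hV
      have hc00 : c 0 ≠ 0 := by
        intro h0
        apply hc0
        funext i
        have hi : i = 0 := Fin.ext (Nat.lt_one_iff.1 i.isLt)
        rw [hi, h0]; rfl
      have hempty : {x : Fin 0 → Bool | SolP q V x} = ∅ := by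
        ext x
        simp only [Set.mem_setOf_eq, Set.mem_empty_iff_false, iff_false]
        intro hx
        have := hx c hc
        simp only [bEval, LinearMap.coe_mk, AddHom.coe_mk, Finset.univ_eq_empty,
          Finset.sum_empty, add_zero] at this
        exact hc00 this
      rw [hempty]
      simp
  | succ n ih =>
    intro V
    have hsplit := card_split (fun x => SolP q V x)
    have hf : {y : Fin n → Bool | SolP q V (Fin.cons false y)}
        = {y : Fin n → Bool | SolP q (V.map (rho q n 0)) y} := by
      ext y; exact (solP_cons q false y V).symm
    have ht : {y : Fin n → Bool | SolP q V (Fin.cons true y)}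
        = {y : Fin n → Bool | SolP q (V.map (rho q n 1)) y} := by
      ext y; exact (solP_cons q true y V).symm
    rw [hf, ht] at hsplit
    have ihf := ih (V.map (rho q n 0))
    have iht := ih (V.map (rho q n 1))
    have hrf := finrank_eq q n 0 V
    have hrt := finrank_eq q n 1 V
    have hkf := finrank_inf_ker_le q n 0 V
    have hkt := finrank_inf_ker_le q n 1 V
    rw [hsplit]
    by_cases h1 : LinearMap.ker (rho q n 1) ⊓ V = ⊥
    · by_cases h0 : LinearMap.ker (rho q n 0) ⊓ V = ⊥
      · rw [h0, finrank_bot, add_zero] at hrf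
        rw [h1, finrank_bot, add_zero] at hrt
        have ihf' : Nat.card {y : Fin n → Bool | SolP q (V.map (rho q n 0)) y}
            * 2 ^ Module.finrank (ZMod q) ↥V ≤ 2 ^ n := by rw [hrf]; exact ihf
        have iht' : Nat.card {y : Fin n → Bool | SolP q (V.map (rho q n 1)) y}
            * 2 ^ Module.finrank (ZMod q) ↥V ≤ 2 ^ n := by rw [hrt]; exact iht
        exact arith1 _ _ _ _ ihf' iht'
      · -- kvec 0 ∈ V, so no solutions with first bit true
        have hmem := mem_of_ne_bot q h0
        have hNt0 : Nat.card {y : Fin n → Bool | SolP q (V.map (rho q n 1)) y} = 0 := by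
          rw [Nat.card_eq_zero]
          left
          rw [Set.isEmpty_coe_sort, Set.eq_empty_iff_forall_notMem]
          intro y hy
          have hy' : SolP q V (Fin.cons true y) := (solP_cons q true y V).1 hy
          have := hy' (kvec q n 0) hmem
          rw [bEval_cons_kvec] at this
          simp at this
        rw [hNt0, add_zero, hrf]
        refine arith2 _ _ _ _ ?_ ihf
        exact Nat.add_le_add_left hkf _
    · -- kvec 1 ∈ V, so no solutions with first bit false
      have hmem := mem_of_ne_bot q h1
      have hNf0 : Nat.card {y : Fin n → Bool | SolP q (V.map (rho q n 0)) y} = 0 := by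
        rw [Nat.card_eq_zero]
        left
        rw [Set.isEmpty_coe_sort, Set.eq_empty_iff_forall_notMem]
        intro y hy
        have hy' : SolP q V (Fin.cons false y) := (solP_cons q false y V).1 hy
        have := hy' (kvec q n 1) hmem
        rw [bEval_cons_kvec] at this
        simp at this
      rw [hNf0, zero_add, hrt]
      refine arith2 _ _ _ _ ?_ iht
      exact Nat.add_le_add_left hkt _

end Stmt13

/-- If a system of affine-linear equations over `ℤ_q` (`q` prime) has more than
`2^n / 2^r` Boolean solutions, then the span of the affine-linear forms (including
constant terms) has dimension less than `r`. -/
theorem stmt_13 (q : ℕ) [Fact (Nat.Prime q)] (n m r : ℕ)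
    (L : Fin m → (Fin (n + 1) → ZMod q))
    (h : (2 : ℚ) ^ n / 2 ^ r <
      (Nat.card {x : Fin n → Bool |
        ∀ i, L i 0 + ∑ j : Fin n, (if x j then L i j.succ else 0) = 0} : ℚ)) :
    Module.finrank (ZMod q) ↥(Submodule.span (ZMod q) (Set.range L)) < r := by
  set V := Submodule.span (ZMod q) (Set.range L) with hV
  have hset : {x : Fin n → Bool |
      ∀ i, L i 0 + ∑ j : Fin n, (if x j then L i j.succ else 0) = 0}
      = {x : Fin n → Bool | Stmt13.SolP q V x} := by
    ext x
    simp only [Set.mem_setOf_eq]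
    constructor
    · intro hx c hc
      refine Submodule.span_induction ?_ ?_ ?_ ?_ hc
      · rintro c ⟨i, rfl⟩
        exact hx i
      · exact map_zero _
      · intro a b _ _ ha hb
        rw [map_add, ha, hb, add_zero]
      · intro t a _ ha
        rw [map_smul, ha, smul_zero]
    · intro hx i
      exact hx (L i) (Submodule.subset_span (Set.mem_range_self i))
  rw [hset] at h
  have hk := Stmt13.key q n V
  by_contra hr
  push_neg at hr
  have h2 : Nat.card {x : Fin n → Bool | Stmt13.SolP q V x} * 2 ^ r ≤ 2 ^ n :=
    le_trans (Nat.mul_le_mul_left _ (Nat.pow_le_pow_right (by norm_num) hr)) hk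
  have h3 : (Nat.card {x : Fin n → Bool | Stmt13.SolP q V x} : ℚ) * 2 ^ r ≤ 2 ^ n := by
    exact_mod_cast h2
  have h4 : (Nat.card {x : Fin n → Bool | Stmt13.SolP q V x} : ℚ) ≤ 2 ^ n / 2 ^ r :=
    (le_div_iff₀ (by positivity)).2 h3
  exact absurd (lt_of_lt_of_le h h4) (lt_irrefl _)
end

section
/- Let f : {0,1}^n → ℤ_3 be arbitrary and let Φ_1, ..., Φ_t : {0,1}^n → ℤ_3 be distinct degree-1 polynomials such that (1) each Φ_i agrees with f on at least a 1/2 fraction of {0,1}^n, and (2) for all i ≠ j, the difference Φ_i − Φ_j has at least 6 variables with nonzero coefficients. Then t ≤ 31. -/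
/-- Evaluation of a degree-1 polynomial `p = (a₀, a)` over `ZMod 3` at a Boolean point. -/
def linEval3 {n : ℕ} (p : ZMod 3 × (Fin n → ZMod 3)) (x : Fin n → Bool) : ZMod 3 :=
  p.1 + ∑ i, if x i then p.2 i else 0

noncomputable section
open Complex Finset

namespace Stmt15

def ω : ℂ := Complex.exp (2 * Real.pi * Complex.I / 3)
lemma hprim : IsPrimitiveRoot ω 3 := Complex.isPrimitiveRoot_exp 3 (by norm_num)
lemma ω_pow_three : ω ^ 3 = 1 := hprim.pow_eq_one
lemma ω_ne_one : ω ≠ 1 := hprim.ne_one (by norm_num)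
lemma ω_sum : 1 + ω + ω ^ 2 = 0 := by
  have h : (ω - 1) * (ω ^ 2 + ω + 1) = ω ^ 3 - 1 := by ring
  rw [ω_pow_three, sub_self] at h
  have h1 : ω - 1 ≠ 0 := sub_ne_zero.mpr ω_ne_one
  have := (mul_eq_zero.mp h).resolve_left h1
  linear_combination this
lemma abs_ω : ‖ω‖ = 1 := by simp [ω, Complex.norm_exp]
lemma conj_ω : (starRingEnd ℂ) ω = ω ^ 2 := by
  have h1 : ω⁻¹ = (starRingEnd ℂ) ω := Complex.inv_eq_conj abs_ω
  have h2 : ω * ω ^ 2 = 1 := by rw [← pow_succ']; exact ω_pow_three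
  rw [← h1, inv_eq_of_mul_eq_one_right h2]
lemma ω_re : ω.re = -1/2 := by
  have h2 : (ω ^ 2).re = ω.re := by rw [← conj_ω, Complex.conj_re]
  have := congrArg Complex.re ω_sum
  simp [Complex.add_re] at this
  linarith

def χ (a : ZMod 3) : ℂ := ω ^ a.val

lemma χ_zero : χ 0 = 1 := by simp [χ]

lemma ω_pow_mod (k : ℕ) : ω ^ (k % 3) = ω ^ k := by
  conv_rhs => rw [← Nat.mod_add_div k 3]
  rw [pow_add, pow_mul, ω_pow_three, one_pow, mul_one]

lemma χ_add (a b : ZMod 3) : χ (a + b) = χ a * χ b := by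
  unfold χ
  rw [← pow_add, ← ω_pow_mod (a.val + b.val), ZMod.val_add]

lemma χ_sum {ι : Type*} (s : Finset ι) (g : ι → ZMod 3) :
    χ (∑ i ∈ s, g i) = ∏ i ∈ s, χ (g i) := by
  classical
  induction s using Finset.cons_induction with
  | empty => simp [χ_zero]
  | cons a s ha ih => rw [Finset.sum_cons, Finset.prod_cons, χ_add, ih]

lemma abs_χ (a : ZMod 3) : ‖χ a‖ = 1 := by
  unfold χ; rw [norm_pow, abs_ω, one_pow]

lemma conj_χ (a : ZMod 3) : (starRingEnd ℂ) (χ a) = χ (-a) := by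
  have h : χ a * χ (-a) = 1 := by rw [← χ_add, add_neg_cancel, χ_zero]
  rw [← Complex.inv_eq_conj (abs_χ a), inv_eq_of_mul_eq_one_right h]

lemma conj_χ_mul (a b : ZMod 3) : (starRingEnd ℂ) (χ a) * χ b = χ (b - a) := by
  rw [conj_χ, ← χ_add, neg_add_eq_sub]

lemma zmod3_cases (a : ZMod 3) : a = 0 ∨ a = 1 ∨ a = 2 := by revert a; decide

lemma χ_one : χ 1 = ω := by
  show ω ^ (1 : ZMod 3).val = ω
  rw [show (1 : ZMod 3).val = 1 from rfl, pow_one]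
lemma χ_two : χ 2 = ω ^ 2 := by
  show ω ^ (2 : ZMod 3).val = ω ^ 2
  rw [show (2 : ZMod 3).val = 2 from rfl]

lemma χ_re (a : ZMod 3) : (χ a).re = if a = 0 then 1 else -1/2 := by
  have h2 : (ω ^ 2).re = ω.re := by rw [← conj_ω, Complex.conj_re]
  rcases zmod3_cases a with h|h|h <;> subst h
  · simp [χ_zero]
  · rw [χ_one]; norm_num [ω_re]
  · rw [χ_two, if_neg (by decide : (2:ZMod 3) ≠ 0)]
    norm_num [h2, ω_re]

lemma abs_one_add_χ (a : ZMod 3) : ‖1 + χ a‖ = if a = 0 then 2 else 1 := by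
  rcases zmod3_cases a with h|h|h <;> subst h
  · rw [χ_zero]; norm_num
  · rw [χ_one]
    have h : 1 + ω = -(ω ^ 2) := by linear_combination ω_sum
    rw [h, norm_neg, norm_pow, abs_ω, one_pow]
    norm_num
  · rw [χ_two, if_neg (by decide : (2:ZMod 3) ≠ 0)]
    have h : 1 + ω ^ 2 = -ω := by linear_combination ω_sum
    rw [h, norm_neg, abs_ω]

lemma cube_sum (n : ℕ) (c : ZMod 3) (d : Fin n → ZMod 3) :
    ∑ x : Fin n → Bool, χ (c + ∑ i, if x i then d i else 0)
      = χ c * ∏ i, (1 + χ (d i)) := by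
  classical
  simp_rw [χ_add, χ_sum]
  rw [← Finset.mul_sum]
  congr 1
  calc ∑ x : Fin n → Bool, ∏ i, χ (if x i then d i else 0)
      = ∏ i, ∑ b : Bool, χ (if b then d i else 0) :=
        (Fintype.prod_sum (fun i (b : Bool) => χ (if b then d i else 0))).symm
    _ = ∏ i, (1 + χ (d i)) := by
        apply Finset.prod_congr rfl
        intro i _
        rw [Fintype.sum_bool]
        simp [χ_zero, add_comm]

lemma cross_bound (n : ℕ) (c : ZMod 3) (d : Fin n → ZMod 3)
    (h6 : 6 ≤ (Finset.univ.filter (fun i => d i ≠ 0)).card) :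
    ‖∑ x : Fin n → Bool, χ (c + ∑ i, if x i then d i else 0)‖
      ≤ 2 ^ n / 64 := by
  classical
  rw [cube_sum, norm_mul, abs_χ, one_mul, norm_prod]
  have hprod : ∏ i, ‖1 + χ (d i)‖
      = ∏ i, (if d i = 0 then (2:ℝ) else 1) := by
    apply Finset.prod_congr rfl
    intro i _
    exact abs_one_add_χ (d i)
  rw [hprod, Finset.prod_ite, Finset.prod_const, Finset.prod_const, one_pow, mul_one]
  set s := (Finset.univ.filter (fun i => d i ≠ 0)).card with hs
  have hsplit : (Finset.univ.filter (fun i => d i = 0)).card + s = n := by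
    rw [hs, Finset.card_filter_add_card_filter_not]
    simp
  have hsn : s ≤ n := by omega
  have hcard : (Finset.univ.filter (fun i => d i = 0)).card = n - s := by omega
  rw [hcard]
  have h1 : (2:ℝ) ^ (n - s) ≤ 2 ^ (n - 6) := by
    apply pow_le_pow_right₀ (by norm_num)
    omega
  have h2 : (2:ℝ) ^ (n - 6) * 64 = 2 ^ n := by
    have : (64 : ℝ) = 2 ^ 6 := by norm_num
    rw [this, ← pow_add]
    congr 1
    omega
  linarith [h1, h2]

lemma inner_char (n : ℕ) (g h : (Fin n → Bool) → ZMod 3) :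
    (inner (𝕜 := ℂ) (show EuclideanSpace ℂ (Fin n → Bool) from WithLp.toLp 2 (fun x => χ (g x)))
      (show EuclideanSpace ℂ (Fin n → Bool) from WithLp.toLp 2 (fun x => χ (h x))))
      = ∑ x : Fin n → Bool, χ (h x - g x) := by
  rw [PiLp.inner_apply]
  apply Finset.sum_congr rfl
  intro x _
  rw [RCLike.inner_apply']
  exact conj_χ_mul (g x) (h x)

lemma card_cube (n : ℕ) : Fintype.card (Fin n → Bool) = 2 ^ n := by
  simp

lemma self_inner (n : ℕ) (g : (Fin n → Bool) → ZMod 3) :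
    (inner (𝕜 := ℂ) (show EuclideanSpace ℂ (Fin n → Bool) from WithLp.toLp 2 (fun x => χ (g x)))
      (show EuclideanSpace ℂ (Fin n → Bool) from WithLp.toLp 2 (fun x => χ (g x)))) = (2 : ℂ) ^ n := by
  rw [inner_char]
  have : ∀ x : Fin n → Bool, χ (g x - g x) = 1 := by
    intro x; rw [sub_self, χ_zero]
  simp only [this, Finset.sum_const, Finset.card_univ, card_cube, nsmul_eq_mul, mul_one]
  push_cast
  ring

lemma natcard_eq_filter {α : Type*} [Fintype α] [DecidableEq α] (P : α → Prop) [DecidablePred P] :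
    Nat.card {x : α | P x} = (Finset.univ.filter P).card := by
  rw [Nat.card_eq_fintype_card]
  convert Fintype.card_subtype P
  simp

end Stmt15

open Stmt15 in
/-- Distinct degree-1 polynomials over `ℤ_3`, each agreeing with `f` on at least half
the cube and pairwise differing in at least `6` variables, number at most `31`. -/
theorem stmt_15 (n t : ℕ) (f : (Fin n → Bool) → ZMod 3)
    (Φ : Fin t → ZMod 3 × (Fin n → ZMod 3)) (hΦ : Function.Injective Φ)
    (hagree : ∀ i, ((2 : ℚ) ^ n) ≤
      2 * Nat.card {x : Fin n → Bool | f x = linEval3 (Φ i) x})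
    (hdiff : ∀ i j, i ≠ j →
      6 ≤ Nat.card {v : Fin n | (Φ i).2 v ≠ (Φ j).2 v}) :
    t ≤ 31 := by
  classical
  set N : ℝ := 2 ^ n with hNdef
  have hN : 0 < N := by positivity
  set u : EuclideanSpace ℂ (Fin n → Bool) := WithLp.toLp 2 (fun x => χ (f x)) with hu
  set v : Fin t → EuclideanSpace ℂ (Fin n → Bool) :=
    fun i => WithLp.toLp 2 (fun x => χ (linEval3 (Φ i) x)) with hv
  set w : EuclideanSpace ℂ (Fin n → Bool) := ∑ i, v i with hw
  -- agreement: real part of ⟪u, v i⟫ is at least N/4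
  have huv : ∀ i, N / 4 ≤ (inner ℂ u (v i) : ℂ).re := by
    intro i
    rw [hu, hv, inner_char, Complex.re_sum]
    have hterm : ∀ x : Fin n → Bool,
        (χ (linEval3 (Φ i) x - f x)).re
          = if linEval3 (Φ i) x = f x then (1:ℝ) else -1/2 := by
      intro x
      rw [χ_re]
      simp only [sub_eq_zero]
    simp only [hterm]
    rw [Finset.sum_ite, Finset.sum_const, Finset.sum_const, nsmul_eq_mul, nsmul_eq_mul]
    set A := (Finset.univ.filter (fun x => linEval3 (Φ i) x = f x)).card with hA
    have hAQ := hagree i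
    rw [natcard_eq_filter] at hAQ
    have hAswap : (Finset.univ.filter (fun x => f x = linEval3 (Φ i) x)).card = A := by
      rw [hA]
      congr 1
      apply Finset.filter_congr
      intro x _
      exact eq_comm
    rw [hAswap] at hAQ
    have hAn : 2 ^ n ≤ 2 * A := by exact_mod_cast hAQ
    have hcards : A + (Finset.univ.filter (fun x => ¬ linEval3 (Φ i) x = f x)).card = 2 ^ n := by
      rw [hA, Finset.card_filter_add_card_filter_not, Finset.card_univ, card_cube]
    have hAle : A ≤ 2 ^ n := by omega
    have hc2 : ((Finset.univ.filter (fun x => ¬ linEval3 (Φ i) x = f x)).card : ℝ)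
        = 2 ^ n - A := by
      have h9 : (Finset.univ.filter (fun x => ¬ linEval3 (Φ i) x = f x)).card = 2 ^ n - A := by omega
      rw [h9]
      push_cast [Nat.cast_sub hAle]
      ring
    rw [hc2]
    have hAcast : (2:ℝ) ^ n ≤ 2 * A := by exact_mod_cast hAn
    rw [hNdef]
    push_cast
    nlinarith [hAcast]
  -- cross terms
  have hvv : ∀ i j, i ≠ j → ‖(inner ℂ (v i) (v j) : ℂ)‖ ≤ N / 64 := by
    intro i j hij
    rw [hv, inner_char]
    have hform : ∀ x : Fin n → Bool,
        linEval3 (Φ j) x - linEval3 (Φ i) x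
          = ((Φ j).1 - (Φ i).1) + ∑ k, if x k then (Φ j).2 k - (Φ i).2 k else 0 := by
      intro x
      have hite : ∀ k : Fin n, (if x k then (Φ j).2 k - (Φ i).2 k else 0)
          = (if x k then (Φ j).2 k else 0) - (if x k then (Φ i).2 k else 0) := by
        intro k; split <;> simp
      simp only [hite, Finset.sum_sub_distrib, linEval3]
      ring
    simp only [hform]
    apply cross_bound
    have h6 := hdiff j i (Ne.symm hij)
    rw [natcard_eq_filter] at h6
    calc (6:ℕ) ≤ (Finset.univ.filter (fun k => (Φ j).2 k ≠ (Φ i).2 k)).card := h6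
      _ = (Finset.univ.filter (fun k => (Φ j).2 k - (Φ i).2 k ≠ 0)).card := by
          apply Finset.card_bij (fun a _ => a) <;> simp [sub_eq_zero]
  -- norms
  have hnu : ‖u‖ ^ 2 = N := by
    rw [← inner_self_eq_norm_sq (𝕜 := ℂ), hu, self_inner,
      show ((2:ℂ))^n = ((2^n : ℝ) : ℂ) by push_cast; ring]
    simp only [RCLike.re_to_complex, Complex.ofReal_re, hNdef]
  have hdiag : ∀ i : Fin t, (inner ℂ (v i) (v i) : ℂ).re = N := by
    intro i
    rw [hv, self_inner,
      show ((2:ℂ))^n = ((2^n : ℝ) : ℂ) by push_cast; ring]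
    simp only [Complex.ofReal_re, hNdef]
  have hnw : ‖w‖ ^ 2 ≤ t * (t * (N / 64) + N) := by
    rw [← inner_self_eq_norm_sq (𝕜 := ℂ), hw, sum_inner]
    simp only [RCLike.re_to_complex]
    rw [Complex.re_sum]
    have hrow : ∀ i : Fin t, (inner ℂ (v i) (∑ j, v j) : ℂ).re ≤ t * (N / 64) + N := by
      intro i
      rw [inner_sum, Complex.re_sum]
      have hterm : ∀ j : Fin t, (inner ℂ (v i) (v j) : ℂ).re
          ≤ N / 64 + (if i = j then N else 0) := by
        intro j
        by_cases hij : i = j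
        · subst hij
          rw [hdiag i, if_pos rfl]
          linarith
        · rw [if_neg hij]
          have h1 : (inner ℂ (v i) (v j) : ℂ).re ≤ ‖(inner ℂ (v i) (v j) : ℂ)‖ :=
            Complex.re_le_norm _
          have h2 := hvv i j hij
          linarith
      calc ∑ j, (inner ℂ (v i) (v j) : ℂ).re
          ≤ ∑ j : Fin t, (N / 64 + if i = j then N else 0) := Finset.sum_le_sum (fun j _ => hterm j)
        _ = t * (N / 64) + N := by
            rw [Finset.sum_add_distrib, Finset.sum_const, Finset.card_univ, Fintype.card_fin,
              nsmul_eq_mul, Finset.sum_ite_eq, if_pos (Finset.mem_univ i)]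
    calc ∑ i, (inner ℂ (v i) (∑ j, v j) : ℂ).re
        ≤ ∑ i : Fin t, (t * (N / 64) + N) := Finset.sum_le_sum (fun i _ => hrow i)
      _ = t * (t * (N / 64) + N) := by
          rw [Finset.sum_const, Finset.card_univ, Fintype.card_fin, nsmul_eq_mul]
  -- Cauchy-Schwarz
  have hre : (t : ℝ) * (N / 4) ≤ (inner ℂ u w : ℂ).re := by
    rw [hw, inner_sum, Complex.re_sum]
    calc (t : ℝ) * (N / 4) = ∑ _i : Fin t, N / 4 := by
          rw [Finset.sum_const, Finset.card_univ, Fintype.card_fin, nsmul_eq_mul]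
      _ ≤ ∑ i, (inner ℂ u (v i) : ℂ).re := Finset.sum_le_sum (fun i _ => huv i)
  have hcs : (inner ℂ u w : ℂ).re ≤ ‖u‖ * ‖w‖ := by
    calc (inner ℂ u w : ℂ).re ≤ ‖(inner ℂ u w : ℂ)‖ := Complex.re_le_norm _
      _ = ‖(inner ℂ u w : ℂ)‖ := rfl
      _ ≤ ‖u‖ * ‖w‖ := norm_inner_le_norm u w
  have hkey : ((t : ℝ) * (N / 4)) ^ 2 ≤ N * (t * (t * (N / 64) + N)) := by
    have h1 : (t : ℝ) * (N / 4) ≤ ‖u‖ * ‖w‖ := le_trans hre hcs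
    have h2 : (0:ℝ) ≤ (t : ℝ) * (N / 4) := by positivity
    have h3 : ((t : ℝ) * (N / 4)) ^ 2 ≤ (‖u‖ * ‖w‖) ^ 2 := by
      apply pow_le_pow_left₀ h2 h1
    calc ((t : ℝ) * (N / 4)) ^ 2 ≤ (‖u‖ * ‖w‖) ^ 2 := h3
      _ = ‖u‖ ^ 2 * ‖w‖ ^ 2 := by ring
      _ ≤ N * (t * (t * (N / 64) + N)) := by
          rw [hnu]
          exact mul_le_mul_of_nonneg_left hnw (le_of_lt hN)
  by_contra hcon
  push_neg at hcon
  have ht : (32 : ℝ) ≤ t := by exact_mod_cast hcon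
  nlinarith [hkey, hN, ht, mul_pos hN hN, sq_nonneg ((t:ℝ) * N)]
end
end

section
/- Let E ⊆ {0,1}^n have density δ = |E|/2^n, let ρ ∈ [−1,1], let x be uniform on {0,1}^n and let y be obtained from x by independently flipping each bit with probability (1−ρ)/2. Then Pr[x ∈ E and y ∈ E] ≤ δ^{2/(1+|ρ|)}. -/
open Real Set

-- convexity base: for q ∈ [-1,0], t ∈ (-1,1): 2 ≤ (1+t)^q + (1-t)^q
lemma auxA {q t : ℝ} (hq : q ≤ 0) (ht : t ∈ Set.Ioo (-1:ℝ) 1) :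
    (2:ℝ) ≤ (1+t) ^ q + (1-t) ^ q := by
  obtain ⟨ht1, ht2⟩ := ht
  have h1 : (0:ℝ) < 1 + t := by linarith
  have h2 : (0:ℝ) < 1 - t := by linarith
  have ha : (0:ℝ) < (1+t) ^ q := Real.rpow_pos_of_pos h1 q
  have hb : (0:ℝ) < (1-t) ^ q := Real.rpow_pos_of_pos h2 q
  have hab : (1:ℝ) ≤ (1+t) ^ q * (1-t) ^ q := by
    rw [← Real.mul_rpow h1.le h2.le]
    have hle : (1+t) * (1-t) ≤ 1 := by nlinarith [sq_nonneg t]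
    have hpos : (0:ℝ) < (1+t) * (1-t) := by positivity
    exact Real.one_le_rpow_of_pos_of_le_one_of_nonpos hpos hle hq
  nlinarith [sq_nonneg ((1+t)^q - (1-t)^q)]

section Bcal
variable {p : ℝ}

noncomputable def g0 (p s : ℝ) : ℝ := (1+s) ^ p + (1-s) ^ p - 2 - p*(p-1)*s^2
noncomputable def g1 (p s : ℝ) : ℝ := p*(1+s) ^ (p-1) - p*(1-s) ^ (p-1) - 2*p*(p-1)*s

lemma hasDerivAt_g0 {s : ℝ} (hs1 : -1 < s) (hs2 : s < 1) :
    HasDerivAt (g0 p) (g1 p s) s := by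
  have h1 : (1+s) ≠ 0 := by linarith
  have h2 : (1-s) ≠ 0 := by linarith
  have d1 : HasDerivAt (fun x : ℝ => (1+x) ^ p) (1 * p * (1+s) ^ (p-1)) s :=
    (HasDerivAt.const_add 1 (hasDerivAt_id s)).rpow_const (Or.inl h1)
  have d2 : HasDerivAt (fun x : ℝ => (1-x) ^ p) ((-1) * p * (1-s) ^ (p-1)) s :=
    (HasDerivAt.const_sub 1 (hasDerivAt_id s)).rpow_const (Or.inl h2)
  have d3 : HasDerivAt (fun x : ℝ => x^2) (2*s) s := by
    simpa using hasDerivAt_pow 2 s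
  have := ((d1.add d2).sub_const 2).sub ((d3.const_mul (p*(p-1))))
  refine HasDerivAt.congr_deriv (f := g0 p) this ?_
  simp only [g1]; ring

lemma hasDerivAt_g1 {s : ℝ} (hs1 : -1 < s) (hs2 : s < 1) :
    HasDerivAt (g1 p) (p*(p-1)*((1+s) ^ (p-2) + (1-s) ^ (p-2) - 2)) s := by
  have h1 : (1+s) ≠ 0 := by linarith
  have h2 : (1-s) ≠ 0 := by linarith
  have d1 : HasDerivAt (fun x : ℝ => (1+x) ^ (p-1)) (1 * (p-1) * (1+s) ^ (p-1-1)) s :=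
    (HasDerivAt.const_add 1 (hasDerivAt_id s)).rpow_const (Or.inl h1)
  have d2 : HasDerivAt (fun x : ℝ => (1-x) ^ (p-1)) ((-1) * (p-1) * (1-s) ^ (p-1-1)) s :=
    (HasDerivAt.const_sub 1 (hasDerivAt_id s)).rpow_const (Or.inl h2)
  have := ((d1.const_mul p).sub (d2.const_mul p)).sub
    ((hasDerivAt_id s).const_mul (2*p*(p-1)))
  refine HasDerivAt.congr_deriv (f := g1 p) this ?_
  have e1 : p - 1 - 1 = p - 2 := by ring
  rw [e1]; ring

end Bcal

lemma g1_nonneg {p : ℝ} (hp1 : 1 ≤ p) (hp2 : p ≤ 2) {s : ℝ} (hs : s ∈ Set.Ico (0:ℝ) 1) :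
    0 ≤ g1 p s := by
  obtain ⟨hs0, hs1⟩ := hs
  have h0 : g1 p 0 = 0 := by norm_num [g1]
  have hmono : MonotoneOn (g1 p) (Set.Icc 0 s) := by
    apply monotoneOn_of_deriv_nonneg (convex_Icc 0 s)
    · intro t ht
      have ht1 : -1 < t := by linarith [ht.1]
      have ht2 : t < 1 := by linarith [ht.2]
      exact (hasDerivAt_g1 ht1 ht2).continuousAt.continuousWithinAt
    · intro t ht
      rw [interior_Icc] at ht
      have ht1 : -1 < t := by linarith [ht.1]
      have ht2 : t < 1 := by linarith [ht.2]
      exact (hasDerivAt_g1 ht1 ht2).differentiableAt.differentiableWithinAt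
    · intro t ht
      rw [interior_Icc] at ht
      have ht1 : -1 < t := by linarith [ht.1]
      have ht2 : t < 1 := by linarith [ht.2]
      rw [(hasDerivAt_g1 ht1 ht2).deriv]
      have := auxA (q := p - 2) (by linarith) ⟨ht1, ht2⟩
      have hpp : 0 ≤ p * (p-1) := by nlinarith
      nlinarith
  have := hmono (Set.left_mem_Icc.mpr hs0) (Set.right_mem_Icc.mpr hs0) hs0
  linarith [this, h0.symm.le]

lemma g0_nonneg_Ico {p : ℝ} (hp1 : 1 ≤ p) (hp2 : p ≤ 2) {s : ℝ} (hs : s ∈ Set.Ico (0:ℝ) 1) :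
    0 ≤ g0 p s := by
  obtain ⟨hs0, hs1⟩ := hs
  have h0 : g0 p 0 = 0 := by norm_num [g0]
  have hmono : MonotoneOn (g0 p) (Set.Icc 0 s) := by
    apply monotoneOn_of_deriv_nonneg (convex_Icc 0 s)
    · intro t ht
      have ht1 : -1 < t := by linarith [ht.1]
      have ht2 : t < 1 := by linarith [ht.2]
      exact (hasDerivAt_g0 ht1 ht2).continuousAt.continuousWithinAt
    · intro t ht
      rw [interior_Icc] at ht
      have ht1 : -1 < t := by linarith [ht.1]
      have ht2 : t < 1 := by linarith [ht.2]
      exact (hasDerivAt_g0 ht1 ht2).differentiableAt.differentiableWithinAt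
    · intro t ht
      rw [interior_Icc] at ht
      have ht1 : -1 < t := by linarith [ht.1]
      have ht2 : t < 1 := by linarith [ht.2]
      rw [(hasDerivAt_g0 ht1 ht2).deriv]
      exact g1_nonneg hp1 hp2 ⟨by linarith [ht.1], ht2⟩
  have := hmono (Set.left_mem_Icc.mpr hs0) (Set.right_mem_Icc.mpr hs0) hs0
  linarith [this, h0.symm.le]

lemma g0_nonneg_one {p : ℝ} (hp1 : 1 ≤ p) (hp2 : p ≤ 2) : 0 ≤ g0 p 1 := by
  have hcont : ContinuousAt (g0 p) 1 := by
    have c1 : ContinuousAt (fun s : ℝ => (1+s) ^ p) 1 := by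
      have := (Real.continuousAt_rpow_const ((1:ℝ)+1) p (Or.inl (by norm_num))).comp
        ((continuous_const.add continuous_id).continuousAt (x := (1:ℝ)))
      exact this
    have c2 : ContinuousAt (fun s : ℝ => (1-s) ^ p) 1 := by
      have := (Real.continuousAt_rpow_const ((1:ℝ)-1) p (Or.inr (by linarith))).comp
        ((continuous_const.sub continuous_id).continuousAt (x := (1:ℝ)))
      exact this
    have c3 : ContinuousAt (fun s : ℝ => p*(p-1)*s^2) 1 :=
      ((continuous_pow 2).continuousAt).const_mul _
    exact ((c1.add c2).sub continuousAt_const).sub c3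
  have htend : Filter.Tendsto (g0 p) (nhdsWithin 1 (Set.Iio 1)) (nhds (g0 p 1)) :=
    hcont.continuousWithinAt.tendsto
  refine ge_of_tendsto htend ?_
  have hIoo : Set.Ioo (0:ℝ) 1 ∈ nhdsWithin 1 (Set.Iio 1) :=
    Ioo_mem_nhdsLT_of_mem (by norm_num : (1:ℝ) ∈ Set.Ioc (0:ℝ) 1)
  filter_upwards [hIoo] with t ht
  exact g0_nonneg_Ico hp1 hp2 ⟨ht.1.le, ht.2⟩

lemma keyB {p s : ℝ} (hp1 : 1 ≤ p) (hp2 : p ≤ 2) (hs : s ∈ Set.Icc (-1:ℝ) 1) :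
    2 + p * (p-1) * s^2 ≤ (1+s) ^ p + (1-s) ^ p := by
  have hneg : ∀ t : ℝ, g0 p (-t) = g0 p t := by
    intro t
    simp only [g0]
    rw [show (1:ℝ) + -t = 1 - t by ring, show (1:ℝ) - -t = 1 + t by ring, neg_pow]
    ring
  have key : ∀ t ∈ Set.Icc (0:ℝ) 1, 0 ≤ g0 p t := by
    intro t ht
    rcases eq_or_lt_of_le ht.2 with h | h
    · rw [h]; exact g0_nonneg_one hp1 hp2
    · exact g0_nonneg_Ico hp1 hp2 ⟨ht.1, h⟩
  have : 0 ≤ g0 p s := by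
    rcases le_or_gt 0 s with h | h
    · exact key s ⟨h, hs.2⟩
    · rw [← hneg s] at *
      exact key (-s) ⟨by linarith, by linarith [hs.1]⟩
  simp only [g0] at this
  linarith

lemma keyC_norm {r s t : ℝ} (hr0 : 0 ≤ r) (hr1 : r ≤ 1)
    (hs : s ∈ Set.Icc (-1:ℝ) 1) (ht : t ∈ Set.Icc (-1:ℝ) 1) :
    1 + r * |s| * |t| ≤ (((1+s) ^ (1+r) + (1-s) ^ (1+r))/2) ^ (1/(1+r))
      * (((1+t) ^ (1+r) + (1-t) ^ (1+r))/2) ^ (1/(1+r)) := by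
  set p := 1 + r with hp
  have hp1 : 1 ≤ p := by simp [hp]; linarith
  have hp2 : p ≤ 2 := by simp [hp]; linarith
  have hppos : (0:ℝ) < p := by linarith
  clear_value p
  -- step 1 : (1 + r*u^2)^(p/2) ≤ D_u for u ∈ [-1,1]
  have step1 : ∀ u : ℝ, u ∈ Set.Icc (-1:ℝ) 1 →
      (1 + r*u^2) ^ ((p:ℝ)/2) ≤ ((1+u) ^ p + (1-u) ^ p)/2 := by
    intro u hu
    have hb : (1 + r*u^2) ^ ((p:ℝ)/2) ≤ 1 + (p/2) * (r*u^2) :=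
      rpow_one_add_le_one_add_mul_self
        (by nlinarith [mul_nonneg hr0 (sq_nonneg u)]) (by positivity) (by linarith)
    have hB := keyB hp1 hp2 hu
    have : 1 + (p/2) * (r*u^2) = (2 + p*(p-1)*u^2)/2 := by
      rw [hp]; ring
    rw [this] at hb
    linarith
  -- step 2 : (1 + r*u^2)^(1/2) ≤ D_u^(1/p)
  have step2 : ∀ u : ℝ, u ∈ Set.Icc (-1:ℝ) 1 →
      (1 + r*u^2) ^ ((1:ℝ)/2) ≤ (((1+u) ^ p + (1-u) ^ p)/2) ^ (1/p) := by
    intro u hu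
    have h1 := step1 u hu
    have hx : (0:ℝ) ≤ (1 + r*u^2) ^ ((p:ℝ)/2) := Real.rpow_nonneg (by positivity) _
    have := Real.rpow_le_rpow hx h1 (by positivity : (0:ℝ) ≤ 1/p)
    rwa [← Real.rpow_mul (by positivity), show (p/2) * (1/p) = (1:ℝ)/2 by
      field_simp] at this
  have hs2 := step2 s hs
  have ht2 := step2 t ht
  -- step 3
  have h3 : 1 + r * |s| * |t| ≤ (1 + r*s^2) ^ ((1:ℝ)/2) * (1 + r*t^2) ^ ((1:ℝ)/2) := by
    rw [← Real.mul_rpow (by positivity) (by positivity)]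
    have hc : (1 + r * |s| * |t|)^(2:ℕ) ≤ (1 + r*s^2) * (1 + r*t^2) := by
      rw [← sq_abs s, ← sq_abs t]
      nlinarith [mul_nonneg hr0 (sq_nonneg (|s| - |t|))]
    have h0 : (0:ℝ) ≤ 1 + r * |s| * |t| := by positivity
    calc 1 + r * |s| * |t| = ((1 + r * |s| * |t|)^(2:ℕ)) ^ ((1:ℝ)/2) := by
          rw [← Real.rpow_natCast (1 + r * |s| * |t|) 2, ← Real.rpow_mul h0]
          norm_num
      _ ≤ ((1 + r*s^2) * (1 + r*t^2)) ^ ((1:ℝ)/2) :=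
          Real.rpow_le_rpow (by positivity) hc (by norm_num)
  calc 1 + r * |s| * |t| ≤ (1 + r*s^2) ^ ((1:ℝ)/2) * (1 + r*t^2) ^ ((1:ℝ)/2) := h3
    _ ≤ (((1+s) ^ p + (1-s) ^ p)/2) ^ (1/p) * (((1+t) ^ p + (1-t) ^ p)/2) ^ (1/p) := by
        apply mul_le_mul hs2 ht2 (Real.rpow_nonneg (by positivity) _)
          (Real.rpow_nonneg ?_ _)
        have h1s : (0:ℝ) ≤ (1+s) ^ p := Real.rpow_nonneg (by linarith [hs.1]) _
        have h2s : (0:ℝ) ≤ (1-s) ^ p := Real.rpow_nonneg (by linarith [hs.2]) _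
        positivity

lemma mul_shuffle {A B X Y c d : ℝ} (h : d*(c*c) = 2) :
    d * (A*(c*X) * (B*(c*Y))) = 2*A*B*(X*Y) := by
  calc d * (A*(c*X) * (B*(c*Y))) = (d*(c*c))*(A*B*(X*Y)) := by ring
    _ = 2*(A*B*(X*Y)) := by rw [h]
    _ = 2*A*B*(X*Y) := by ring

set_option maxHeartbeats 1000000 in
lemma keyC' {ρ : ℝ} (h1 : -1 ≤ ρ) (h2 : ρ ≤ 1) {a0 a1 b0 b1 : ℝ}
    (ha0 : 0 ≤ a0) (ha1 : 0 ≤ a1) (hb0 : 0 ≤ b0) (hb1 : 0 ≤ b1) :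
    (1+ρ)/2*(a0*b0+a1*b1) + (1-ρ)/2*(a0*b1+a1*b0)
      ≤ (2:ℝ) ^ ((1:ℝ) - 2/(1+|ρ|)) * ((a0^(1+|ρ|)+a1^(1+|ρ|))^(1/(1+|ρ|))
          * (b0^(1+|ρ|)+b1^(1+|ρ|))^(1/(1+|ρ|))) := by
  have hr0 : 0 ≤ |ρ| := abs_nonneg ρ
  have hr1 : |ρ| ≤ 1 := abs_le.mpr ⟨h1, h2⟩
  have hppos : (0:ℝ) < 1 + |ρ| := by linarith
  have hpne : (1 + |ρ|) ≠ 0 := ne_of_gt hppos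
  have hRHS0 : 0 ≤ (2:ℝ) ^ ((1:ℝ) - 2/(1+|ρ|)) * ((a0^(1+|ρ|)+a1^(1+|ρ|))^(1/(1+|ρ|))
      * (b0^(1+|ρ|)+b1^(1+|ρ|))^(1/(1+|ρ|))) := by
    apply mul_nonneg (Real.rpow_nonneg (by norm_num) _)
    apply mul_nonneg <;>
      exact Real.rpow_nonneg (add_nonneg (Real.rpow_nonneg (by assumption) _)
        (Real.rpow_nonneg (by assumption) _)) _
  rcases eq_or_lt_of_le (add_nonneg ha0 ha1) with hA | hA
  · have h0 : a0 = 0 := by linarith [ha0, ha1, hA]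
    have h1' : a1 = 0 := by linarith [ha0, ha1, hA]
    rw [h0, h1']
    calc (1+ρ)/2*(0*b0+0*b1) + (1-ρ)/2*(0*b1+0*b0) = 0 := by ring
      _ ≤ _ := by rw [h0, h1'] at hRHS0; exact hRHS0
  rcases eq_or_lt_of_le (add_nonneg hb0 hb1) with hB | hB
  · have h0 : b0 = 0 := by linarith [hb0, hb1, hB]
    have h1' : b1 = 0 := by linarith [hb0, hb1, hB]
    rw [h0, h1']
    calc (1+ρ)/2*(a0*0+a1*0) + (1-ρ)/2*(a0*0+a1*0) = 0 := by ring
      _ ≤ _ := by rw [h0, h1'] at hRHS0; exact hRHS0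
  -- main case
  set s : ℝ := (a0-a1)/(a0+a1) with hs_def
  set t : ℝ := (b0-b1)/(b0+b1) with ht_def
  clear_value s t
  have hAne : a0 + a1 ≠ 0 := ne_of_gt hA
  have hBne : b0 + b1 ≠ 0 := ne_of_gt hB
  have hs : s ∈ Set.Icc (-1:ℝ) 1 := by
    constructor
    · rw [hs_def, le_div_iff₀ hA]; linarith
    · rw [hs_def, div_le_one hA]; linarith
  have ht : t ∈ Set.Icc (-1:ℝ) 1 := by
    constructor
    · rw [ht_def, le_div_iff₀ hB]; linarith
    · rw [ht_def, div_le_one hB]; linarith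
  have hs1 : (0:ℝ) ≤ 1 + s := by linarith [hs.1]
  have hs2 : (0:ℝ) ≤ 1 - s := by linarith [hs.2]
  have ht1 : (0:ℝ) ≤ 1 + t := by linarith [ht.1]
  have ht2 : (0:ℝ) ≤ 1 - t := by linarith [ht.2]
  have hA2 : (0:ℝ) < (a0+a1)/2 := by linarith
  have hB2 : (0:ℝ) < (b0+b1)/2 := by linarith
  have ea0 : a0 = ((a0+a1)/2) * (1+s) := by rw [hs_def]; field_simp; ring
  have ea1 : a1 = ((a0+a1)/2) * (1-s) := by rw [hs_def]; field_simp; ring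
  have eb0 : b0 = ((b0+b1)/2) * (1+t) := by rw [ht_def]; field_simp; ring
  have eb1 : b1 = ((b0+b1)/2) * (1-t) := by rw [ht_def]; field_simp; ring
  have hnorm := keyC_norm hr0 hr1 hs ht
  -- LHS = 2*A*B*(1+ρ*s*t)
  have hLHS : (1+ρ)/2*(a0*b0+a1*b1) + (1-ρ)/2*(a0*b1+a1*b0)
      = 2*((a0+a1)/2)*((b0+b1)/2)*(1 + ρ*(s*t)) := by
    rw [hs_def, ht_def]; field_simp; ring
  have hab : ρ*(s*t) ≤ |ρ| * |s| * |t| := by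
    calc ρ*(s*t) ≤ |ρ*(s*t)| := le_abs_self _
      _ = |ρ| * |s| * |t| := by rw [abs_mul, abs_mul]; ring
  -- a0^p + a1^p
  have hA0p : a0^(1+|ρ|) + a1^(1+|ρ|)
      = ((a0+a1)/2)^(1+|ρ|) * (2*(((1+s)^(1+|ρ|) + (1-s)^(1+|ρ|))/2)) := by
    have e : a0^(1+|ρ|) + a1^(1+|ρ|)
        = (((a0+a1)/2)*(1+s))^(1+|ρ|) + (((a0+a1)/2)*(1-s))^(1+|ρ|) := by
      rw [← ea0, ← ea1]
    rw [e, Real.mul_rpow hA2.le hs1, Real.mul_rpow hA2.le hs2]; ring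
  have hB0p : b0^(1+|ρ|) + b1^(1+|ρ|)
      = ((b0+b1)/2)^(1+|ρ|) * (2*(((1+t)^(1+|ρ|) + (1-t)^(1+|ρ|))/2)) := by
    have e : b0^(1+|ρ|) + b1^(1+|ρ|)
        = (((b0+b1)/2)*(1+t))^(1+|ρ|) + (((b0+b1)/2)*(1-t))^(1+|ρ|) := by
      rw [← eb0, ← eb1]
    rw [e, Real.mul_rpow hB2.le ht1, Real.mul_rpow hB2.le ht2]; ring
  have hDs0 : (0:ℝ) ≤ ((1+s)^(1+|ρ|) + (1-s)^(1+|ρ|))/2 := by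
    have := Real.rpow_nonneg hs1 (1+|ρ|); have := Real.rpow_nonneg hs2 (1+|ρ|); linarith
  have hDt0 : (0:ℝ) ≤ ((1+t)^(1+|ρ|) + (1-t)^(1+|ρ|))/2 := by
    have := Real.rpow_nonneg ht1 (1+|ρ|); have := Real.rpow_nonneg ht2 (1+|ρ|); linarith
  have hApow : (a0^(1+|ρ|) + a1^(1+|ρ|))^(1/(1+|ρ|))
      = ((a0+a1)/2) * ((2:ℝ)^(1/(1+|ρ|))
        * (((1+s)^(1+|ρ|) + (1-s)^(1+|ρ|))/2)^(1/(1+|ρ|))) := by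
    rw [hA0p, Real.mul_rpow (Real.rpow_nonneg hA2.le _) (by linarith),
      Real.mul_rpow (by norm_num) hDs0,
      ← Real.rpow_mul hA2.le, mul_one_div, div_self hpne, Real.rpow_one]
  have hBpow : (b0^(1+|ρ|) + b1^(1+|ρ|))^(1/(1+|ρ|))
      = ((b0+b1)/2) * ((2:ℝ)^(1/(1+|ρ|))
        * (((1+t)^(1+|ρ|) + (1-t)^(1+|ρ|))/2)^(1/(1+|ρ|))) := by
    rw [hB0p, Real.mul_rpow (Real.rpow_nonneg hB2.le _) (by linarith),
      Real.mul_rpow (by norm_num) hDt0,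
      ← Real.rpow_mul hB2.le, mul_one_div, div_self hpne, Real.rpow_one]
  have h2pow : (2:ℝ) ^ ((1:ℝ) - 2/(1+|ρ|)) * ((2:ℝ)^(1/(1+|ρ|)) * (2:ℝ)^(1/(1+|ρ|))) = 2 := by
    rw [← Real.rpow_add two_pos, ← Real.rpow_add two_pos]
    rw [show (1:ℝ) - 2/(1+|ρ|) + (1/(1+|ρ|) + 1/(1+|ρ|)) = 1 by field_simp; ring]
    exact Real.rpow_one 2
  have hprod : (0:ℝ) ≤ 2*((a0+a1)/2)*((b0+b1)/2) :=
    mul_nonneg (mul_nonneg (by norm_num) (by linarith)) (by linarith)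
  rw [hLHS, hApow, hBpow]
  calc 2*((a0+a1)/2)*((b0+b1)/2)*(1 + ρ*(s*t))
      ≤ 2*((a0+a1)/2)*((b0+b1)/2)*(1 + |ρ| * |s| * |t|) := by
        apply mul_le_mul_of_nonneg_left (by linarith) hprod
    _ ≤ 2*((a0+a1)/2)*((b0+b1)/2)*((((1+s)^(1+|ρ|) + (1-s)^(1+|ρ|))/2)^(1/(1+|ρ|))
          * (((1+t)^(1+|ρ|) + (1-t)^(1+|ρ|))/2)^(1/(1+|ρ|))) := by
        apply mul_le_mul_of_nonneg_left hnorm hprod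
    _ = _ := (mul_shuffle h2pow).symm

lemma keyD {ρ : ℝ} (h1 : -1 ≤ ρ) (h2 : ρ ≤ 1) :
    ∀ (n : ℕ) (f g : (Fin n → Bool) → ℝ), (∀ x, 0 ≤ f x) → (∀ x, 0 ≤ g x) →
    (∑ x : Fin n → Bool, ∑ y : Fin n → Bool,
        (∏ i, (if x i = y i then (1+ρ)/2 else (1-ρ)/2)) * (f x * g y))
      ≤ ((2:ℝ) ^ ((1:ℝ) - 2/(1+|ρ|)))^n *
        ((∑ x : Fin n → Bool, f x ^ (1+|ρ|)) ^ (1/(1+|ρ|)) *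
         (∑ x : Fin n → Bool, g x ^ (1+|ρ|)) ^ (1/(1+|ρ|))) := by
  have hppos : (0:ℝ) < 1+|ρ| := by positivity
  have hpne : (1+|ρ|) ≠ 0 := ne_of_gt hppos
  have hinv : ∀ a : ℝ, 0 ≤ a → (a ^ (1+|ρ|)) ^ (1/(1+|ρ|)) = a := fun a ha => by
    rw [← Real.rpow_mul ha, mul_one_div, div_self hpne, Real.rpow_one]
  have hinv' : ∀ a : ℝ, 0 ≤ a → (a ^ (1/(1+|ρ|))) ^ (1+|ρ|) = a := fun a ha => by
    rw [← Real.rpow_mul ha, one_div, inv_mul_cancel₀ hpne, Real.rpow_one]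
  intro n
  induction n with
  | zero =>
    intro f g hf hg
    simp only [Finset.univ_unique, Finset.sum_singleton, pow_zero, one_mul,
      Finset.univ_eq_empty, Finset.prod_empty]
    rw [hinv _ (hf _), hinv _ (hg _)]
  | succ n IH =>
    intro f g hf hg
    have reindex : ∀ F : (Fin (n+1) → Bool) → ℝ,
        (∑ x : Fin (n+1) → Bool, F x)
          = ∑ b : Bool, ∑ z : Fin n → Bool, F (Fin.cons b z) := by
      intro F
      rw [← Equiv.sum_comp (Fin.consEquiv (fun _ : Fin (n+1) => Bool)) F,
        Fintype.sum_prod_type]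
      rfl
    set W : Bool → Bool → ℝ := fun b b' => if b = b' then (1+ρ)/2 else (1-ρ)/2 with hW
    have hWnn : ∀ b b', 0 ≤ W b b' := by
      intro b b'; rw [hW]; dsimp only; split_ifs <;> linarith
    have wsplit : ∀ (b b' : Bool) (z z' : Fin n → Bool),
        (∏ i : Fin (n+1),
          (if (Fin.cons b z : Fin (n+1) → Bool) i = (Fin.cons b' z' : Fin (n+1) → Bool) i then (1+ρ)/2 else (1-ρ)/2))
        = W b b' * ∏ i : Fin n, (if z i = z' i then (1+ρ)/2 else (1-ρ)/2) := by
      intro b b' z z'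
      rw [Fin.prod_univ_succ]
      simp [Fin.cons_zero, Fin.cons_succ, hW]
    set c : ℝ := (2:ℝ) ^ ((1:ℝ) - 2/(1+|ρ|)) with hc
    have hc0 : 0 ≤ c := Real.rpow_nonneg (by norm_num) _
    set Pf : Bool → ℝ := fun b =>
      (∑ z : Fin n → Bool, (f (Fin.cons b z)) ^ (1+|ρ|)) ^ (1/(1+|ρ|)) with hPf
    set Pg : Bool → ℝ := fun b =>
      (∑ z : Fin n → Bool, (g (Fin.cons b z)) ^ (1+|ρ|)) ^ (1/(1+|ρ|)) with hPg
    have hPf0 : ∀ b, 0 ≤ Pf b := fun b => Real.rpow_nonneg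
      (Finset.sum_nonneg fun z _ => Real.rpow_nonneg (hf _) _) _
    have hPg0 : ∀ b, 0 ≤ Pg b := fun b => Real.rpow_nonneg
      (Finset.sum_nonneg fun z _ => Real.rpow_nonneg (hg _) _) _
    -- step 1 : restructure LHS
    have step1 : (∑ x : Fin (n+1) → Bool, ∑ y : Fin (n+1) → Bool,
        (∏ i, (if x i = y i then (1+ρ)/2 else (1-ρ)/2)) * (f x * g y))
        = ∑ b : Bool, ∑ b' : Bool, W b b' *
            (∑ z : Fin n → Bool, ∑ z' : Fin n → Bool,
              (∏ i : Fin n, (if z i = z' i then (1+ρ)/2 else (1-ρ)/2)) *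
              (f (Fin.cons b z) * g (Fin.cons b' z'))) := by
      rw [reindex]
      refine Finset.sum_congr rfl fun b _ => ?_
      have inner : ∀ z : Fin n → Bool,
          (∑ y : Fin (n+1) → Bool,
            (∏ i, (if (Fin.cons b z : Fin (n+1) → Bool) i = y i then (1+ρ)/2 else (1-ρ)/2))
              * (f (Fin.cons b z) * g y))
          = ∑ b' : Bool, ∑ z' : Fin n → Bool, W b b' *
              ((∏ i : Fin n, (if z i = z' i then (1+ρ)/2 else (1-ρ)/2)) *
               (f (Fin.cons b z) * g (Fin.cons b' z'))) := by
        intro z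
        rw [reindex]
        refine Finset.sum_congr rfl fun b' _ => ?_
        refine Finset.sum_congr rfl fun z' _ => ?_
        rw [wsplit]; ring
      rw [Finset.sum_congr rfl fun z _ => inner z, Finset.sum_comm]
      refine Finset.sum_congr rfl fun b' _ => ?_
      rw [Finset.mul_sum]
      refine Finset.sum_congr rfl fun z _ => ?_
      rw [Finset.mul_sum]
    rw [step1]
    -- step 2 : apply IH inside
    have step2 : ∀ b b', W b b' *
            (∑ z : Fin n → Bool, ∑ z' : Fin n → Bool,
              (∏ i : Fin n, (if z i = z' i then (1+ρ)/2 else (1-ρ)/2)) *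
              (f (Fin.cons b z) * g (Fin.cons b' z')))
          ≤ W b b' * (c^n * (Pf b * Pg b')) := by
      intro b b'
      exact mul_le_mul_of_nonneg_left
        (IH (fun z => f (Fin.cons b z)) (fun z => g (Fin.cons b' z))
          (fun z => hf _) (fun z => hg _)) (hWnn b b')
    calc (∑ b : Bool, ∑ b' : Bool, W b b' *
            (∑ z : Fin n → Bool, ∑ z' : Fin n → Bool,
              (∏ i : Fin n, (if z i = z' i then (1+ρ)/2 else (1-ρ)/2)) *
              (f (Fin.cons b z) * g (Fin.cons b' z'))))
        ≤ ∑ b : Bool, ∑ b' : Bool, W b b' * (c^n * (Pf b * Pg b')) :=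
          Finset.sum_le_sum fun b _ => Finset.sum_le_sum fun b' _ => step2 b b'
      _ = c^n * ((1+ρ)/2*(Pf true * Pg true + Pf false * Pg false)
            + (1-ρ)/2*(Pf true * Pg false + Pf false * Pg true)) := by
          rw [Fintype.sum_bool, Fintype.sum_bool, Fintype.sum_bool]
          rw [hW]; norm_num; ring
      _ ≤ c^n * (c * ((Pf true ^ (1+|ρ|) + Pf false ^ (1+|ρ|)) ^ (1/(1+|ρ|))
            * (Pg true ^ (1+|ρ|) + Pg false ^ (1+|ρ|)) ^ (1/(1+|ρ|)))) := by
          apply mul_le_mul_of_nonneg_left _ (pow_nonneg hc0 n)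
          exact keyC' h1 h2 (hPf0 true) (hPf0 false) (hPg0 true) (hPg0 false)
      _ = _ := by
          rw [hPf, hPg]
          dsimp only
          rw [hinv' _ (Finset.sum_nonneg fun z _ => Real.rpow_nonneg (hf _) _),
            hinv' _ (Finset.sum_nonneg fun z _ => Real.rpow_nonneg (hf _) _),
            hinv' _ (Finset.sum_nonneg fun z _ => Real.rpow_nonneg (hg _) _),
            hinv' _ (Finset.sum_nonneg fun z _ => Real.rpow_nonneg (hg _) _)]
          rw [reindex (fun x => f x ^ (1+|ρ|)), reindex (fun x => g x ^ (1+|ρ|)),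
            Fintype.sum_bool, Fintype.sum_bool]
          ring

/-- Small-set expansion consequence of hypercontractivity: for a set `E` of density
`δ` in `{0,1}^n` and `ρ`-correlated pair `(x, y)`,
`Pr[x ∈ E ∧ y ∈ E] ≤ δ^(2/(1+|ρ|))`. -/
theorem stmt_16 (n : ℕ) (E : Finset (Fin n → Bool)) (ρ : ℝ)
    (hρ : ρ ∈ Set.Icc (-1 : ℝ) 1) :
    (∑ x ∈ E, ∑ y ∈ E, ∏ i, (if x i = y i then (1 + ρ) / 2 else (1 - ρ) / 2)) / 2 ^ n
      ≤ ((E.card : ℝ) / 2 ^ n) ^ ((2 : ℝ) / (1 + |ρ|)) := by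
  obtain ⟨h1, h2⟩ := hρ
  have hppos : (0:ℝ) < 1+|ρ| := by positivity
  have hpne : (1+|ρ|) ≠ 0 := ne_of_gt hppos
  classical
  set f : (Fin n → Bool) → ℝ := fun x => if x ∈ E then 1 else 0 with hf
  have hf0 : ∀ x, 0 ≤ f x := fun x => by rw [hf]; dsimp only; split_ifs <;> norm_num
  have hsum : (∑ x ∈ E, ∑ y ∈ E, ∏ i, (if x i = y i then (1 + ρ) / 2 else (1 - ρ) / 2))
      = ∑ x : Fin n → Bool, ∑ y : Fin n → Bool,
          (∏ i, (if x i = y i then (1+ρ)/2 else (1-ρ)/2)) * (f x * f y) := by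
    symm
    calc ∑ x : Fin n → Bool, ∑ y : Fin n → Bool,
          (∏ i, (if x i = y i then (1+ρ)/2 else (1-ρ)/2)) * (f x * f y)
        = ∑ x : Fin n → Bool, (if x ∈ E then
            (∑ y : Fin n → Bool, (if y ∈ E then
              (∏ i, (if x i = y i then (1+ρ)/2 else (1-ρ)/2)) else 0)) else 0) := by
          refine Finset.sum_congr rfl fun x _ => ?_
          by_cases hx : x ∈ E
          · rw [if_pos hx]
            refine Finset.sum_congr rfl fun y _ => ?_
            by_cases hy : y ∈ E
            · rw [if_pos hy, hf]; dsimp only; rw [if_pos hx, if_pos hy]; ring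
            · rw [if_neg hy, hf]; dsimp only; rw [if_neg hy]; ring
          · rw [if_neg hx, Finset.sum_eq_zero]
            intro y _; rw [hf]; dsimp only; rw [if_neg hx]; ring
      _ = ∑ x ∈ E, ∑ y ∈ E, ∏ i, (if x i = y i then (1 + ρ) / 2 else (1 - ρ) / 2) := by
          rw [Fintype.sum_ite_mem]
          exact Finset.sum_congr rfl fun x _ => by rw [Fintype.sum_ite_mem]
  have hcard : (∑ x : Fin n → Bool, f x ^ (1+|ρ|)) = (E.card : ℝ) := by
    have : ∀ x : Fin n → Bool, f x ^ (1+|ρ|) = if x ∈ E then (1:ℝ) else 0 := by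
      intro x; rw [hf]; dsimp only; split_ifs
      · exact Real.one_rpow _
      · exact Real.zero_rpow hpne
    rw [Finset.sum_congr rfl fun x _ => this x, Fintype.sum_ite_mem]
    simp
  have key := keyD h1 h2 n f f hf0 hf0
  rw [← hsum, hcard] at key
  have h2n : (0:ℝ) < 2^n := by positivity
  have hK : (0:ℝ) ≤ (E.card : ℝ) := Nat.cast_nonneg _
  calc (∑ x ∈ E, ∑ y ∈ E, ∏ i, (if x i = y i then (1 + ρ) / 2 else (1 - ρ) / 2)) / 2 ^ n
      ≤ (((2:ℝ) ^ ((1:ℝ) - 2/(1+|ρ|)))^n *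
          ((E.card : ℝ) ^ ((1:ℝ)/(1+|ρ|)) * (E.card : ℝ) ^ ((1:ℝ)/(1+|ρ|)))) / 2^n :=
        (div_le_div_iff_of_pos_right h2n).mpr key
    _ = ((E.card : ℝ) / 2 ^ n) ^ ((2 : ℝ) / (1 + |ρ|)) := by
        have e1 : (E.card : ℝ) ^ ((2:ℝ)/(1+|ρ|))
            = (E.card : ℝ) ^ ((1:ℝ)/(1+|ρ|)) * (E.card : ℝ) ^ ((1:ℝ)/(1+|ρ|)) := by
          rw [show (2:ℝ)/(1+|ρ|) = 1/(1+|ρ|) + 1/(1+|ρ|) by ring]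
          exact Real.rpow_add' hK (by positivity)
        rw [← e1, Real.div_rpow hK (by positivity : (0:ℝ) ≤ 2^n)]
        rw [show ((2:ℝ)^n) = (2:ℝ)^(n:ℝ) from (Real.rpow_natCast 2 n).symm]
        rw [show (((2:ℝ) ^ ((1:ℝ) - 2/(1+|ρ|)))^n) = (2:ℝ)^(((1:ℝ) - 2/(1+|ρ|))*(n:ℝ)) from by
          rw [Real.rpow_mul (by norm_num), Real.rpow_natCast]]
        rw [← Real.rpow_mul (by norm_num : (0:ℝ) ≤ 2)]
        have hpow : (2:ℝ)^(((1:ℝ)-2/(1+|ρ|))*(n:ℝ)) * (2:ℝ)^((n:ℝ)*((2:ℝ)/(1+|ρ|)))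
            = (2:ℝ)^((n:ℝ)) := by
          rw [← Real.rpow_add two_pos]; congr 1; field_simp; ring
        rw [div_eq_div_iff (by positivity) (by positivity)]
        calc (2:ℝ)^(((1:ℝ)-2/(1+|ρ|))*(n:ℝ))
              * ((E.card : ℝ) ^ ((2:ℝ)/(1+|ρ|))) * (2:ℝ)^((n:ℝ)*((2:ℝ)/(1+|ρ|)))
            = ((2:ℝ)^(((1:ℝ)-2/(1+|ρ|))*(n:ℝ)) * (2:ℝ)^((n:ℝ)*((2:ℝ)/(1+|ρ|))))
              * (E.card : ℝ) ^ ((2:ℝ)/(1+|ρ|)) := by ring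
          _ = (E.card : ℝ) ^ ((2:ℝ)/(1+|ρ|)) * (2:ℝ)^((n:ℝ)) := by rw [hpow]; ring
end

section
/- Let X be a finite universe and S₁,...,S_t ⊆ X with densities μ(S_i) = |S_i|/|X| = 1/2 + α_i, α_i ≥ 0, such that pairwise intersections satisfy μ(S_i ∩ S_j) ≤ 1/4 − 0.001 for all i ≠ j. Let μ(S₁ ∪ ... ∪ S_t) = 1/2 + α with α ≤ 1/2. Then there do not exist more than 4002 indices i; i.e., t ≤ 4002. -/
/-- Abstract set-system form of the clique bound: subsets of a finite universe of
densities `1/2 + αᵢ` (`αᵢ ≥ 0`) with pairwise intersections of density at most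
`1/4 - 0.001`, whose union has density `1/2 + β` with `β ≤ 1/2`, number at most
`4002`. -/
theorem stmt_19 (X : Type*) [Fintype X] [Nonempty X] [DecidableEq X]
    (t : ℕ) (S : Fin t → Finset X) (α : Fin t → ℝ) (hα : ∀ i, 0 ≤ α i)
    (hdens : ∀ i, ((S i).card : ℝ) = (1 / 2 + α i) * Fintype.card X)
    (hpair : ∀ i j, i ≠ j →
      (((S i) ∩ (S j)).card : ℝ) ≤ ((1 : ℝ) / 4 - 0.001) * Fintype.card X)
    (β : ℝ) (hβ : β ≤ 1 / 2)
    (hunion : ((Finset.univ.biUnion S).card : ℝ) = (1 / 2 + β) * Fintype.card X) :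
    t ≤ 4002 := by
  classical
  by_contra hcon
  push_neg at hcon
  have ht : (4003 : ℝ) ≤ (t : ℝ) := by exact_mod_cast hcon
  set N : ℝ := (Fintype.card X : ℝ) with hNdef
  have hN0 : (0 : ℝ) < N := by
    rw [hNdef]
    exact_mod_cast Fintype.card_pos
  set U := Finset.univ.biUnion S with hUdef
  set f : X → ℝ := fun x => ∑ i : Fin t, if x ∈ S i then (1 : ℝ) else 0 with hfdef
  -- f vanishes off U
  have hf0 : ∀ x ∉ U, f x = 0 := by
    intro x hx
    simp only [hUdef, Finset.mem_biUnion] at hx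
    apply Finset.sum_eq_zero
    intro i _
    have : x ∉ S i := fun h => hx ⟨i, Finset.mem_univ i, h⟩
    simp [this]
  -- first moment
  have hsingle : ∀ i : Fin t, ∑ x : X, (if x ∈ S i then (1 : ℝ) else 0) = ((S i).card : ℝ) := by
    intro i
    rw [Finset.sum_ite_mem, Finset.univ_inter, Finset.sum_const, nsmul_eq_mul, mul_one]
  have hsum : ∑ x ∈ U, f x = ∑ i : Fin t, ((S i).card : ℝ) := by
    have h1 : ∑ x ∈ U, f x = ∑ x : X, f x :=
      Finset.sum_subset (Finset.subset_univ U) (fun x _ hx => hf0 x hx)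
    rw [h1, hfdef]
    rw [Finset.sum_comm]
    exact Finset.sum_congr rfl fun i _ => hsingle i
  -- second moment
  have hsq : ∑ x : X, (f x) ^ 2 = ∑ i : Fin t, ∑ j : Fin t, (((S i) ∩ (S j)).card : ℝ) := by
    have hpt : ∀ x : X, (f x) ^ 2 =
        ∑ i : Fin t, ∑ j : Fin t, (if x ∈ S i ∩ S j then (1 : ℝ) else 0) := by
      intro x
      rw [sq, hfdef]
      rw [Finset.sum_mul_sum]
      apply Finset.sum_congr rfl
      intro i _
      apply Finset.sum_congr rfl
      intro j _
      by_cases hi : x ∈ S i <;> by_cases hj : x ∈ S j <;>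
        simp [hi, hj, Finset.mem_inter]
    calc ∑ x : X, (f x) ^ 2
        = ∑ x : X, ∑ i : Fin t, ∑ j : Fin t, (if x ∈ S i ∩ S j then (1 : ℝ) else 0) := by
          exact Finset.sum_congr rfl fun x _ => hpt x
      _ = ∑ i : Fin t, ∑ j : Fin t, ∑ x : X, (if x ∈ S i ∩ S j then (1 : ℝ) else 0) := by
          rw [Finset.sum_comm]
          apply Finset.sum_congr rfl
          intro i _
          rw [Finset.sum_comm]
      _ = ∑ i : Fin t, ∑ j : Fin t, (((S i) ∩ (S j)).card : ℝ) := by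
          apply Finset.sum_congr rfl; intro i _
          apply Finset.sum_congr rfl; intro j _
          rw [Finset.sum_ite_mem, Finset.univ_inter, Finset.sum_const, nsmul_eq_mul, mul_one]
  -- Cauchy–Schwarz
  have hCS : (∑ x ∈ U, f x) ^ 2 ≤ (U.card : ℝ) * ∑ x ∈ U, (f x) ^ 2 :=
    sq_sum_le_card_mul_sum_sq
  have hsub : ∑ x ∈ U, (f x) ^ 2 ≤ ∑ x : X, (f x) ^ 2 :=
    Finset.sum_le_sum_of_subset_of_nonneg (Finset.subset_univ U)
      (fun x _ _ => sq_nonneg _)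
  -- bounds
  have hcardle : ∀ i : Fin t, ((S i).card : ℝ) ≤ N := by
    intro i
    rw [hNdef]
    exact_mod_cast Finset.card_le_card (Finset.subset_univ (S i))
  have hQ : ∑ i : Fin t, ∑ j : Fin t, (((S i) ∩ (S j)).card : ℝ)
      ≤ (t : ℝ) ^ 2 * (0.249 * N) + (t : ℝ) * N := by
    have hterm : ∀ i j : Fin t, (((S i) ∩ (S j)).card : ℝ)
        ≤ 0.249 * N + (if i = j then N else 0) := by
      intro i j
      by_cases hij : i = j
      · subst hij
        rw [Finset.inter_self, if_pos rfl]
        have := hcardle i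
        nlinarith
      · simp only [if_neg hij]
        have := hpair i j hij
        norm_num at this ⊢
        linarith
    calc ∑ i : Fin t, ∑ j : Fin t, (((S i) ∩ (S j)).card : ℝ)
        ≤ ∑ i : Fin t, ∑ j : Fin t, (0.249 * N + (if i = j then N else 0)) := by
          apply Finset.sum_le_sum; intro i _
          apply Finset.sum_le_sum; intro j _
          exact hterm i j
      _ = (t : ℝ) ^ 2 * (0.249 * N) + (t : ℝ) * N := by
          simp only [Finset.sum_add_distrib, Finset.sum_const, Finset.card_univ,
            Fintype.card_fin, nsmul_eq_mul, Finset.sum_ite_eq, Finset.mem_univ, if_pos]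
          ring
  have hs_lb : (t : ℝ) * (N / 2) ≤ ∑ i : Fin t, ((S i).card : ℝ) := by
    calc (t : ℝ) * (N / 2) = ∑ _i : Fin t, (N / 2) := by
          rw [Finset.sum_const, Finset.card_univ, Fintype.card_fin, nsmul_eq_mul]
      _ ≤ ∑ i : Fin t, ((S i).card : ℝ) := by
          apply Finset.sum_le_sum
          intro i _
          rw [hdens i]
          have := hα i
          nlinarith
  have hM : (U.card : ℝ) ≤ N := by
    rw [hUdef] at *
    rw [hunion]
    nlinarith
  have hU0 : (0 : ℝ) ≤ (U.card : ℝ) := Nat.cast_nonneg _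
  -- combine
  have key : ((t : ℝ) * (N / 2)) ^ 2 ≤ N * ((t : ℝ) ^ 2 * (0.249 * N) + (t : ℝ) * N) := by
    have h1 : (∑ x ∈ U, f x) ^ 2 ≤ (U.card : ℝ) *
        ∑ i : Fin t, ∑ j : Fin t, (((S i) ∩ (S j)).card : ℝ) := by
      rw [← hsq]
      calc (∑ x ∈ U, f x) ^ 2 ≤ (U.card : ℝ) * ∑ x ∈ U, (f x) ^ 2 := hCS
        _ ≤ (U.card : ℝ) * ∑ x : X, (f x) ^ 2 := by
            apply mul_le_mul_of_nonneg_left hsub hU0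
    have h2 : ((t : ℝ) * (N / 2)) ^ 2 ≤ (∑ x ∈ U, f x) ^ 2 := by
      rw [hsum]
      have h3 : (0 : ℝ) ≤ (t : ℝ) * (N / 2) := by positivity
      nlinarith
    have hQN : (0 : ℝ) ≤ (t : ℝ) ^ 2 * (0.249 * N) + (t : ℝ) * N := by positivity
    calc ((t : ℝ) * (N / 2)) ^ 2 ≤ (U.card : ℝ) *
          ∑ i : Fin t, ∑ j : Fin t, (((S i) ∩ (S j)).card : ℝ) := le_trans h2 h1
      _ ≤ (U.card : ℝ) * ((t : ℝ) ^ 2 * (0.249 * N) + (t : ℝ) * N) :=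
          mul_le_mul_of_nonneg_left hQ hU0
      _ ≤ N * ((t : ℝ) ^ 2 * (0.249 * N) + (t : ℝ) * N) :=
          mul_le_mul_of_nonneg_right hM hQN
  nlinarith [sq_nonneg N, sq_nonneg (t : ℝ), mul_pos hN0 hN0, sq_nonneg ((t:ℝ) - 1000)]
end
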